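/- arXiv:1510.04976 — 3 statements merged into one kernel-verified Lean document; each statement's English description precedes it below -/
import Mathlib

section
/- Let γ > 0, α ∈ ℝ, and define r(λ) = -z·(2ψ'(1+z)·z² - 2z + 1) / (γ·(4πα - γ·(ψ(1+z) - log z - 1/(2z) - ψ(1) - ψ(2)))) evaluated at z = γ/(2√(-λ)), for λ < 0 real with |λ| small. Then r(λ) → -1/(3γ·(γ - 2Cγ + 4πα)) as λ → 0⁻, where C is the Euler–Mascheroni constant, provided γ - 2Cγ + 4πα ≠ 0. -/
open Filter Real

/-- The digamma function `ψ(z) = Γ'(z)/Γ(z)`. -/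
noncomputable def digamma (z : ℂ) : ℂ := deriv Complex.Gamma z / Complex.Gamma z

/-- The trigamma function `ψ'(z)`, the derivative of the digamma function. -/
noncomputable def trigamma (z : ℂ) : ℂ := deriv digamma z

/-- The relative trace of the resolvent, as a function of `z = γ/(2√(-λ))`. -/
noncomputable def relTrace (γ α : ℝ) (z : ℂ) : ℂ :=
  -z * (2 * trigamma (1 + z) * z ^ 2 - 2 * z + 1) /
    ((γ : ℂ) * (4 * (Real.pi : ℂ) * (α : ℂ) -
      (γ : ℂ) * (digamma (1 + z) - Complex.log z - 1 / (2 * z) - digamma 1 - digamma 2)))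

namespace Stmt9


lemma hasSum_telescope {g : ℕ → ℝ} (h0 : Tendsto g atTop (nhds 0))
    (hnn : ∀ n, 0 ≤ g n - g (n + 1)) : HasSum (fun n => g n - g (n + 1)) (g 0) := by
  refine (hasSum_iff_tendsto_nat_of_nonneg hnn _).mpr ?_
  simp only [Finset.sum_range_sub' g]
  simpa using tendsto_const_nhds.sub h0

lemma tendsto_inv_shift (c : ℝ) : Tendsto (fun n : ℕ => ((n : ℝ) + c)⁻¹) atTop (nhds 0) :=
  (tendsto_atTop_add_const_right _ c tendsto_natCast_atTop_atTop).inv_tendsto_atTop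

variable {z : ℝ}

noncomputable def a (z : ℝ) (n : ℕ) : ℝ := (n : ℝ) + 1 + z

lemma a_pos (hz : 1 ≤ z) (n : ℕ) : 2 ≤ a z n := by
  have : (0:ℝ) ≤ n := Nat.cast_nonneg n
  simp only [a]; linarith

lemma a_ge (hz : 1 ≤ z) (n : ℕ) : 1 + z ≤ a z n := by
  have : (0:ℝ) ≤ n := Nat.cast_nonneg n
  simp only [a]; linarith

lemma a_sq_sub_pos (hz : 1 ≤ z) (n : ℕ) : 0 < (a z n) ^ 2 - 1/4 := by
  have h := a_pos hz n; nlinarith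

lemma hasSum_t (hz : 1 ≤ z) :
    HasSum (fun n => ((a z n) ^ 2 - 1/4)⁻¹) (z + 1/2)⁻¹ := by
  have key : ∀ n : ℕ, ((a z n) ^ 2 - 1/4)⁻¹ =
      ((n : ℝ) + (z + 1/2))⁻¹ - (((n : ℕ) + 1 : ℕ) + (z + 1/2))⁻¹ := by
    intro n
    have h2 : 2 ≤ a z n := a_pos hz n
    have h1 : (0:ℝ) < (n : ℝ) + (z + 1/2) := by
      have : (0:ℝ) ≤ n := Nat.cast_nonneg n; linarith
    have h2' : (0:ℝ) < ((n:ℕ) + 1 : ℕ) + (z + 1/2) := by push_cast; linarith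
    rw [inv_sub_inv h1.ne' h2'.ne',
      show ((((n:ℕ) + 1 : ℕ):ℝ) + (z + 1/2)) - ((n:ℝ) + (z + 1/2)) = 1 by push_cast; ring,
      one_div]
    congr 1
    simp only [a]
    push_cast; ring
  have g0 : Tendsto (fun n : ℕ => ((n : ℝ) + (z + 1/2))⁻¹) atTop (nhds 0) := tendsto_inv_shift _
  have hnn : ∀ n : ℕ, 0 ≤ ((n : ℝ) + (z + 1/2))⁻¹ - (((n : ℕ) + 1 : ℕ) + (z + 1/2))⁻¹ := by
    intro n
    have h1 : (0:ℝ) < (n : ℝ) + (z + 1/2) := by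
      have : (0:ℝ) ≤ n := Nat.cast_nonneg n; linarith
    have : ((n : ℝ) + (z + 1/2)) ≤ (((n : ℕ) + 1 : ℕ) + (z + 1/2)) := by push_cast; linarith
    have := inv_anti₀ h1 this
    linarith
  have := hasSum_telescope g0 hnn
  simp only [← key] at this
  simpa using this


/-- HasSum of cube telescoping: `u n = (1/3)(aₙ-1/2)⁻³ - (1/3)(aₙ+1/2)⁻³`,
    with value `(1/3)(z+1/2)⁻³`; `u n = ((a n)^2 + 1/12)/(((a n)^2-1/4)^3)`. -/
lemma hasSum_u (hz : 1 ≤ z) :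
    HasSum (fun n => ((a z n) ^ 2 + 1/12) / ((a z n) ^ 2 - 1/4) ^ 3)
      ((1/3) * ((z + 1/2)⁻¹) ^ 3) := by
  have key : ∀ n : ℕ, ((a z n) ^ 2 + 1/12) / ((a z n) ^ 2 - 1/4) ^ 3 =
      (1/3) * (((n : ℝ) + (z + 1/2))⁻¹) ^ 3 -
      (1/3) * ((((n : ℕ) + 1 : ℕ) + (z + 1/2) : ℝ)⁻¹) ^ 3 := by
    intro n
    have h2 : 2 ≤ a z n := a_pos hz n
    have h1 : (0:ℝ) < (n : ℝ) + (z + 1/2) := by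
      have : (0:ℝ) ≤ n := Nat.cast_nonneg n; linarith
    have h2' : (0:ℝ) < (((n:ℕ) + 1 : ℕ) : ℝ) + (z + 1/2) := by push_cast; linarith
    have hx : ((n : ℝ) + (z + 1/2)) = a z n - 1/2 := by simp [a]; ring
    have hy : ((((n:ℕ) + 1 : ℕ) : ℝ) + (z + 1/2)) = a z n + 1/2 := by push_cast [a]; ring
    rw [hx, hy]
    have hxx : a z n - 1/2 ≠ 0 := by linarith
    have hyy : a z n + 1/2 ≠ 0 := by linarith
    have hd : ((a z n) ^ 2 - 1/4) ^ 3 ≠ 0 := pow_ne_zero 3 (a_sq_sub_pos hz n).ne'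
    have hx3 : (a z n - 1/2) ^ 3 ≠ 0 := pow_ne_zero 3 hxx
    have hy3 : (a z n + 1/2) ^ 3 ≠ 0 := pow_ne_zero 3 hyy
    rw [div_eq_iff hd, show ((a z n) ^ 2 - 1/4) ^ 3 = (a z n - 1/2) ^ 3 * (a z n + 1/2) ^ 3 by ring,
      sub_mul, inv_pow, inv_pow, mul_assoc, mul_assoc, inv_mul_cancel_left₀ hx3,
      mul_comm ((a z n - 1/2) ^ 3), inv_mul_cancel_left₀ hy3]
    ring
  have g0 : Tendsto (fun n : ℕ => (1/3) * (((n : ℝ) + (z + 1/2))⁻¹) ^ 3) atTop (nhds 0) := by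
    simpa using (((tendsto_inv_shift (z + 1/2)).pow 3).const_mul (1/3 : ℝ))
  have hnn : ∀ n : ℕ, 0 ≤ (1/3) * (((n : ℝ) + (z + 1/2))⁻¹) ^ 3 -
      (1/3) * ((((n : ℕ) + 1 : ℕ) + (z + 1/2) : ℝ)⁻¹) ^ 3 := by
    intro n
    have h1 : (0:ℝ) < (n : ℝ) + (z + 1/2) := by
      have : (0:ℝ) ≤ n := Nat.cast_nonneg n; linarith
    have hle : ((n : ℝ) + (z + 1/2)) ≤ ((((n:ℕ) + 1 : ℕ):ℝ) + (z + 1/2)) := by push_cast; linarith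
    have := inv_anti₀ h1 hle
    have h1' : (0:ℝ) ≤ ((((n:ℕ) + 1 : ℕ):ℝ) + (z + 1/2))⁻¹ := by positivity
    have := pow_le_pow_left₀ h1' this 3
    linarith
  have := hasSum_telescope g0 hnn
  simp only [← key] at this
  simpa using this

/-- The real trigamma-type series `S z = Σ_{n≥0} 1/(n+1+z)²`. -/
noncomputable def S (z : ℝ) : ℝ := ∑' n : ℕ, (((a z n) ^ 2)⁻¹)

noncomputable def beta (z : ℝ) : ℝ := (4 * (1 + z) ^ 2)⁻¹

lemma beta_mem (hz : 1 ≤ z) : 0 < beta z ∧ beta z ≤ 1/16 := by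
  constructor
  · have : (0:ℝ) < 4 * (1 + z)^2 := by positivity
    exact inv_pos.mpr this
  · rw [beta, show (1/16 : ℝ) = (16:ℝ)⁻¹ by norm_num]
    apply inv_anti₀ (by norm_num)
    nlinarith

lemma summable_inv_sq (hz : 1 ≤ z) : Summable (fun n => ((a z n) ^ 2)⁻¹) := by
  refine Summable.of_nonneg_of_le (fun n => by positivity) (fun n => ?_) (hasSum_t hz).summable
  have h := a_pos hz n
  have h4 : 0 < (a z n)^2 - 1/4 := a_sq_sub_pos hz n
  apply inv_anti₀ h4
  linarith

lemma hasSum_S (hz : 1 ≤ z) : HasSum (fun n => ((a z n) ^ 2)⁻¹) (S z) :=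
  (summable_inv_sq hz).hasSum

lemma summable_q (hz : 1 ≤ z) : Summable (fun n => ((a z n) ^ 4)⁻¹) := by
  refine Summable.of_nonneg_of_le (fun n => by positivity) (fun n => ?_) (summable_inv_sq hz)
  have h := a_pos hz n
  apply inv_anti₀ (by positivity)
  have h2 : (1:ℝ) ≤ a z n ^ 2 := by nlinarith
  nlinarith [mul_le_mul_of_nonneg_left h2 (sq_nonneg (a z n))]

noncomputable def Q (z : ℝ) : ℝ := ∑' n : ℕ, ((a z n) ^ 4)⁻¹

lemma q_le_u (hz : 1 ≤ z) (n : ℕ) :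
    ((a z n) ^ 4)⁻¹ ≤ ((a z n) ^ 2 + 1/12) / ((a z n) ^ 2 - 1/4) ^ 3 := by
  have h := a_pos hz n
  have h4 : 0 < (a z n)^2 - 1/4 := a_sq_sub_pos hz n
  rw [show ((a z n) ^ 4)⁻¹ = 1 / (a z n) ^ 4 by rw [one_div],
    div_le_div_iff₀ (by positivity) (by positivity)]
  have h2 : (4:ℝ) ≤ a z n ^ 2 := by nlinarith
  nlinarith [sq_nonneg (a z n), mul_le_mul_of_nonneg_left h2 (sq_nonneg (a z n)),
    mul_nonneg (mul_nonneg (sq_nonneg (a z n)) (sq_nonneg (a z n))) (sq_nonneg (a z n))]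

lemma Q_le (hz : 1 ≤ z) : Q z ≤ (1/3) * ((z + 1/2)⁻¹) ^ 3 := by
  rw [← (hasSum_u hz).tsum_eq]
  exact Summable.tsum_le_tsum (q_le_u hz) (summable_q hz) (hasSum_u hz).summable

noncomputable def c2 (z : ℝ) : ℝ := (1 + beta z / 3) * ((1 - beta z)⁻¹) ^ 3

lemma c2_ge_one (hz : 1 ≤ z) : 1 ≤ c2 z := by
  obtain ⟨hb0, hb1⟩ := beta_mem hz
  have h1 : (1:ℝ) ≤ (1 - beta z)⁻¹ := by
    rw [le_inv_comm₀ one_pos (by linarith)]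
    linarith
  have h3 : (1:ℝ) ≤ ((1 - beta z)⁻¹) ^ 3 := one_le_pow₀ h1
  have h5 : (1:ℝ) ≤ 1 + beta z / 3 := by linarith
  calc (1:ℝ) = 1 * 1 := by ring
  _ ≤ (1 + beta z / 3) * ((1 - beta z)⁻¹) ^ 3 :=
      mul_le_mul h5 h3 zero_le_one (by linarith)

lemma u_le_c2_q (hz : 1 ≤ z) (n : ℕ) :
    ((a z n) ^ 2 + 1/12) / ((a z n) ^ 2 - 1/4) ^ 3 ≤ c2 z * ((a z n) ^ 4)⁻¹ := by
  obtain ⟨hb0, hb1⟩ := beta_mem hz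
  have h := a_pos hz n
  have hge := a_ge hz n
  have h4 : 0 < (a z n)^2 - 1/4 := a_sq_sub_pos hz n
  have hb : beta z * (1 + z)^2 = 1/4 := by
    rw [beta]; field_simp
  have haa : (1+z)^2 ≤ (a z n)^2 := by nlinarith
  -- (a²-1/4) ≥ a²(1-β)
  have key1 : (a z n)^2 * (1 - beta z) ≤ (a z n)^2 - 1/4 := by nlinarith
  have key1' : 0 < (a z n)^2 * (1 - beta z) := by nlinarith
  -- a²+1/12 ≤ a²(1+β/3)
  have key2 : (a z n)^2 + 1/12 ≤ (a z n)^2 * (1 + beta z / 3) := by nlinarith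
  have step : ((a z n) ^ 2 + 1/12) / ((a z n) ^ 2 - 1/4) ^ 3 ≤
      ((a z n)^2 * (1 + beta z / 3)) / ((a z n)^2 * (1 - beta z)) ^ 3 := by
    apply div_le_div₀ (by nlinarith) key2 (by positivity)
    apply pow_le_pow_left₀ (le_of_lt key1') key1
  refine step.trans (le_of_eq ?_)
  rw [c2]
  have ha0 : a z n ≠ 0 := by linarith
  have hb2 : (1 - beta z) ≠ 0 := by linarith
  field_simp

lemma Q_ge (hz : 1 ≤ z) : (1/3) * ((z + 1/2)⁻¹) ^ 3 ≤ c2 z * Q z := by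
  have := Summable.tsum_le_tsum (u_le_c2_q hz) (hasSum_u hz).summable ((summable_q hz).mul_left (c2 z))
  rw [(hasSum_u hz).tsum_eq, tsum_mul_left] at this
  exact this

/-- E z is the error term: S z = (z+1/2)⁻¹ - E z -/
noncomputable def E (z : ℝ) : ℝ := (z + 1/2)⁻¹ - S z

lemma hasSum_E (hz : 1 ≤ z) :
    HasSum (fun n => ((a z n) ^ 2 - 1/4)⁻¹ - ((a z n) ^ 2)⁻¹) (E z) :=
  (hasSum_t hz).sub (hasSum_S hz)

lemma e_eq (hz : 1 ≤ z) (n : ℕ) :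
    ((a z n) ^ 2 - 1/4)⁻¹ - ((a z n) ^ 2)⁻¹ = (1/4) / ((a z n)^2 * ((a z n)^2 - 1/4)) := by
  have h := a_pos hz n
  have h4 : 0 < (a z n)^2 - 1/4 := a_sq_sub_pos hz n
  rw [inv_sub_inv h4.ne' (by positivity)]
  rw [div_eq_div_iff (by positivity) (by positivity)]
  ring

lemma e_ge (hz : 1 ≤ z) (n : ℕ) :
    (1/4) * ((a z n) ^ 4)⁻¹ ≤ ((a z n) ^ 2 - 1/4)⁻¹ - ((a z n) ^ 2)⁻¹ := by
  have h := a_pos hz n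
  have h4 : 0 < (a z n)^2 - 1/4 := a_sq_sub_pos hz n
  rw [e_eq hz n, show (1/4 : ℝ) * ((a z n) ^ 4)⁻¹ = (1/4) / ((a z n)^4) by ring]
  apply div_le_div_of_nonneg_left (by norm_num) (by positivity)
  nlinarith

lemma e_le (hz : 1 ≤ z) (n : ℕ) :
    ((a z n) ^ 2 - 1/4)⁻¹ - ((a z n) ^ 2)⁻¹ ≤ (1/4) * (1 - beta z)⁻¹ * ((a z n) ^ 4)⁻¹ := by
  obtain ⟨hb0, hb1⟩ := beta_mem hz
  have h := a_pos hz n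
  have hge := a_ge hz n
  have h4 : 0 < (a z n)^2 - 1/4 := a_sq_sub_pos hz n
  have hb : beta z * (1 + z)^2 = 1/4 := by rw [beta]; field_simp
  have haa : (1+z)^2 ≤ (a z n)^2 := by nlinarith
  have h5 : (1:ℝ)/4 ≤ beta z * (a z n)^2 := by nlinarith
  have key1 : (a z n)^4 * (1 - beta z) ≤ (a z n)^2 * ((a z n)^2 - 1/4) := by
    nlinarith [mul_le_mul_of_nonneg_left h5 (sq_nonneg (a z n))]
  have key1' : 0 < (a z n)^4 * (1 - beta z) := by nlinarith [sq_nonneg (a z n)]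
  rw [e_eq hz n]
  have step : (1/4 : ℝ) / ((a z n)^2 * ((a z n)^2 - 1/4)) ≤ (1/4) / ((a z n)^4 * (1 - beta z)) :=
    div_le_div_of_nonneg_left (by norm_num) key1' key1
  refine step.trans (le_of_eq ?_)
  have ha0 : a z n ≠ 0 := by linarith
  have hb2 : (1 - beta z) ≠ 0 := by linarith
  field_simp

lemma E_bounds (hz : 1 ≤ z) :
    (1/4) * Q z ≤ E z ∧ E z ≤ (1/4) * (1 - beta z)⁻¹ * Q z := by
  constructor
  · have := Summable.tsum_le_tsum (e_ge hz) ((summable_q hz).mul_left (1/4)) (hasSum_E hz).summable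
    rwa [(hasSum_E hz).tsum_eq, tsum_mul_left] at this
  · have := Summable.tsum_le_tsum (e_le hz) (hasSum_E hz).summable
      ((summable_q hz).mul_left ((1/4) * (1 - beta z)⁻¹))
    rwa [(hasSum_E hz).tsum_eq, tsum_mul_left] at this

lemma tendsto_beta : Tendsto beta atTop (nhds 0) := by
  have h1 : Tendsto (fun z : ℝ => z⁻¹) atTop (nhds 0) := tendsto_inv_atTop_zero
  refine tendsto_of_tendsto_of_tendsto_of_le_of_le' tendsto_const_nhds h1 ?_ ?_
  · filter_upwards [eventually_ge_atTop (1:ℝ)] with z hz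
    exact le_of_lt (beta_mem hz).1
  · filter_upwards [eventually_ge_atTop (1:ℝ)] with z hz
    rw [beta]
    apply inv_anti₀ (by linarith)
    nlinarith

lemma tendsto_w : Tendsto (fun z : ℝ => z * (z + 1/2)⁻¹) atTop (nhds 1) := by
  have h1 : Tendsto (fun z : ℝ => (z + 1/2)⁻¹) atTop (nhds 0) :=
    (tendsto_atTop_add_const_right _ _ tendsto_id).inv_tendsto_atTop
  have h2 : Tendsto (fun z : ℝ => 1 - (1/2) * (z + 1/2)⁻¹) atTop (nhds 1) := by
    simpa using tendsto_const_nhds.sub (h1.const_mul (1/2 : ℝ))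
  refine h2.congr' ?_
  filter_upwards [eventually_ge_atTop (1:ℝ)] with z hz
  have hz2 : z + 1/2 ≠ 0 := by linarith
  field_simp
  ring

lemma tendsto_c2 : Tendsto c2 atTop (nhds 1) := by
  have hb := tendsto_beta
  have h1 : Tendsto (fun z => 1 + beta z / 3) atTop (nhds 1) := by
    simpa using tendsto_const_nhds.add (hb.div_const 3)
  have h2 : Tendsto (fun z => ((1 - beta z)⁻¹) ^ 3) atTop (nhds 1) := by
    have h3 : Tendsto (fun z => (1 - beta z)⁻¹) atTop (nhds 1) := by
      have := (tendsto_const_nhds.sub hb).inv₀ (by norm_num : (1:ℝ) - 0 ≠ 0)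
      simpa using this
    simpa using h3.pow 3
  unfold c2
  simpa using h1.mul h2

lemma tendsto_c1 : Tendsto (fun z => (1 - beta z)⁻¹) atTop (nhds 1) := by
  have := (tendsto_const_nhds.sub tendsto_beta).inv₀ (by norm_num : (1:ℝ) - 0 ≠ 0)
  simpa using this

lemma tendsto_G : Tendsto (fun z : ℝ => 2 * z ^ 3 * E z) atTop (nhds (1/6)) := by
  have hw3 : Tendsto (fun z : ℝ => (z * (z + 1/2)⁻¹) ^ 3) atTop (nhds 1) := by
    simpa using tendsto_w.pow 3
  have hlo : Tendsto (fun z : ℝ => (1/6) * (z * (z + 1/2)⁻¹) ^ 3 / c2 z) atTop (nhds (1/6)) := by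
    have := (hw3.const_mul (1/6 : ℝ)).div tendsto_c2 one_ne_zero
    simp only [mul_one, div_one] at this
    exact this
  have hhi : Tendsto (fun z : ℝ => (1/6) * (1 - beta z)⁻¹ * (z * (z + 1/2)⁻¹) ^ 3)
      atTop (nhds (1/6)) := by
    have := ((tendsto_c1.const_mul (1/6 : ℝ)).mul hw3)
    simpa using this
  refine tendsto_of_tendsto_of_tendsto_of_le_of_le' hlo hhi ?_ ?_
  · filter_upwards [eventually_ge_atTop (1:ℝ)] with z hz
    have hq := Q_ge hz
    have hE := (E_bounds hz).1
    have hc2 : 0 < c2 z := lt_of_lt_of_le one_pos (c2_ge_one hz)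
    have hz0 : (0:ℝ) < z := by linarith
    have hQ' : (1/3) * ((z + 1/2)⁻¹) ^ 3 / c2 z ≤ Q z := by
      rw [div_le_iff₀ hc2] at *
      nlinarith [Q_ge hz]
    have key : (1/6) * (z * (z + 1/2)⁻¹) ^ 3 / c2 z ≤ 2 * z ^ 3 * ((1/4) * Q z) := by
      have h2 : 2 * z ^ 3 * ((1/4) * ((1/3) * ((z + 1/2)⁻¹) ^ 3 / c2 z)) ≤
          2 * z ^ 3 * ((1/4) * Q z) := by
        apply mul_le_mul_of_nonneg_left _ (by positivity)
        apply mul_le_mul_of_nonneg_left hQ' (by norm_num)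
      refine le_trans (le_of_eq ?_) h2
      field_simp
      ring
    refine key.trans ?_
    apply mul_le_mul_of_nonneg_left hE (by positivity)
  · filter_upwards [eventually_ge_atTop (1:ℝ)] with z hz
    have hE := (E_bounds hz).2
    have hz0 : (0:ℝ) < z := by linarith
    obtain ⟨hb0, hb1⟩ := beta_mem hz
    have hc1 : (0:ℝ) < (1 - beta z)⁻¹ := by
      apply inv_pos.mpr; linarith
    have step : 2 * z ^ 3 * E z ≤ 2 * z ^ 3 * ((1/4) * (1 - beta z)⁻¹ * Q z) :=
      mul_le_mul_of_nonneg_left hE (by positivity)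
    refine step.trans ?_
    have step2 : 2 * z ^ 3 * ((1/4) * (1 - beta z)⁻¹ * Q z) ≤
        2 * z ^ 3 * ((1/4) * (1 - beta z)⁻¹ * ((1/3) * ((z + 1/2)⁻¹) ^ 3)) := by
      apply mul_le_mul_of_nonneg_left _ (by positivity)
      apply mul_le_mul_of_nonneg_left (Q_le hz) (by positivity)
    refine step2.trans (le_of_eq ?_)
    ring

/-- The key numerator limit. -/
lemma num_tendsto : Tendsto (fun z : ℝ => z * (2 * z ^ 2 * S z - 2 * z + 1))
    atTop (nhds (1/3)) := by
  have h : Tendsto (fun z : ℝ => (1/2) * (z * (z + 1/2)⁻¹) - 2 * z ^ 3 * E z)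
      atTop (nhds (1/3)) := by
    have h0 := (tendsto_w.const_mul (1/2 : ℝ)).sub tendsto_G
    convert h0 using 1
    norm_num
  refine h.congr' ?_
  filter_upwards [eventually_ge_atTop (1:ℝ)] with z hz
  have hS : S z = (z + 1/2)⁻¹ - E z := by rw [E]; ring
  have hz2 : z + 1/2 ≠ 0 := by intro h; nlinarith [h]
  rw [hS]
  field_simp
  ring



lemma cast_ne_neg_nat {x : ℝ} (hx : 0 < x) : ∀ m : ℕ, (x : ℂ) ≠ -(m : ℂ) := by
  intro m h
  have := congrArg Complex.re h
  simp only [Complex.ofReal_re, Complex.neg_re, Complex.natCast_re] at this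
  have : (0:ℝ) ≤ m := Nat.cast_nonneg m
  linarith [congrArg Complex.re h, Complex.ofReal_re x]

lemma real_ne_neg_nat {x : ℝ} (hx : 0 < x) : ∀ m : ℕ, x ≠ -(m : ℝ) := by
  intro m h
  have : (0:ℝ) ≤ m := Nat.cast_nonneg m
  linarith [h]

lemma deriv_Gamma_real {x : ℝ} (hx : 0 < x) :
    deriv Complex.Gamma (x : ℂ) = ((deriv Real.Gamma x : ℝ) : ℂ) := by
  have h1 : HasDerivAt Complex.Gamma (deriv Complex.Gamma (x : ℂ)) (x : ℂ) :=
    (Complex.differentiableAt_Gamma _ (cast_ne_neg_nat hx)).hasDerivAt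
  have h2 : HasDerivAt (fun y : ℝ => Complex.Gamma (y : ℂ)) (deriv Complex.Gamma (x : ℂ)) x :=
    h1.comp_ofReal
  have h3 : HasDerivAt Real.Gamma (deriv Real.Gamma x) x :=
    (Real.differentiableAt_Gamma (real_ne_neg_nat hx)).hasDerivAt
  have h4 : HasDerivAt (fun y : ℝ => ((Real.Gamma y : ℝ) : ℂ)) ((deriv Real.Gamma x : ℝ) : ℂ) x :=
    h3.ofReal_comp
  have heq : (fun y : ℝ => Complex.Gamma (y : ℂ)) = fun y : ℝ => ((Real.Gamma y : ℝ) : ℂ) :=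
    funext fun y => Complex.Gamma_ofReal y
  rw [heq] at h2
  exact h2.unique h4

/-- real digamma -/
noncomputable def psiR (x : ℝ) : ℝ := deriv Real.Gamma x / Real.Gamma x

lemma digamma_real {x : ℝ} (hx : 0 < x) : digamma (x : ℂ) = ((psiR x : ℝ) : ℂ) := by
  rw [digamma, deriv_Gamma_real hx, Complex.Gamma_ofReal, psiR, Complex.ofReal_div]

lemma digamma_one : digamma 1 = -(Real.eulerMascheroniConstant : ℂ) := by
  have h : digamma ((1 : ℝ) : ℂ) = ((psiR 1 : ℝ) : ℂ) := digamma_real one_pos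
  have h2 : psiR 1 = -Real.eulerMascheroniConstant := by
    rw [psiR, Real.Gamma_one, div_one,
      show deriv Real.Gamma 1 = -Real.eulerMascheroniConstant by
        rw [Real.eulerMascheroniConstant_eq_neg_deriv]; ring]
  rw [show (1:ℂ) = ((1:ℝ):ℂ) by norm_num, h, h2, Complex.ofReal_neg]

lemma digamma_add_one {s : ℂ} (hne : ∀ m : ℕ, s ≠ -(m : ℂ)) :
    digamma (s + 1) = digamma s + 1 / s := by
  have hs0 : s ≠ 0 := by simpa using hne 0
  have hdG : DifferentiableAt ℂ Complex.Gamma s := Complex.differentiableAt_Gamma _ hne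
  have hGne : Complex.Gamma s ≠ 0 := Complex.Gamma_ne_zero hne
  -- deriv of Gamma (· + 1) at s
  have hev : (fun w : ℂ => Complex.Gamma (w + 1)) =ᶠ[nhds s] fun w => w * Complex.Gamma w := by
    filter_upwards [IsOpen.mem_nhds isOpen_ne hs0] with w hw
    exact Complex.Gamma_add_one w hw
  have hR : HasDerivAt (fun w : ℂ => w * Complex.Gamma w)
      (Complex.Gamma s + s * deriv Complex.Gamma s) s := by
    have := (hasDerivAt_id s).mul hdG.hasDerivAt
    exact this.congr_deriv (by simp)
  have hL : deriv (fun w : ℂ => Complex.Gamma (w + 1)) s = deriv Complex.Gamma (s + 1) := by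
    simpa using deriv_comp_add_const Complex.Gamma 1 s
  have hderiv : deriv Complex.Gamma (s + 1) = Complex.Gamma s + s * deriv Complex.Gamma s := by
    rw [← hL, hev.deriv_eq, hR.deriv]
  rw [digamma, digamma, hderiv, Complex.Gamma_add_one s hs0]
  field_simp
  ring

lemma digamma_two : digamma 2 = 1 - (Real.eulerMascheroniConstant : ℂ) := by
  have h := digamma_add_one (s := 1) (by
    intro m h
    have := congrArg Complex.re h
    simp at this
    have : (0:ℝ) ≤ m := Nat.cast_nonneg m
    linarith [congrArg Complex.re h])
  rw [show (2:ℂ) = 1 + 1 by norm_num, h, digamma_one]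
  ring

lemma psiR_add_one {x : ℝ} (hx : 0 < x) : psiR (x + 1) = psiR x + 1 / x := by
  have h := digamma_add_one (cast_ne_neg_nat hx)
  rw [show ((x:ℂ) + 1) = (((x + 1 : ℝ)):ℂ) by push_cast; ring] at h
  rw [digamma_real (by linarith : (0:ℝ) < x + 1), digamma_real hx] at h
  have : (((psiR (x+1) : ℝ)):ℂ) = (((psiR x + 1/x : ℝ)):ℂ) := by
    rw [h]; push_cast; ring
  exact_mod_cast this

lemma psiR_add_nat {x : ℝ} (hx : 0 < x) (N : ℕ) :
    psiR (x + N) = psiR x + ∑ k ∈ Finset.range N, 1 / (x + k) := by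
  induction N with
  | zero => simp
  | succ N ih =>
    have hxN : (0:ℝ) < x + N := by
      have : (0:ℝ) ≤ N := Nat.cast_nonneg N; linarith
    rw [show (x + (N + 1 : ℕ) : ℝ) = (x + N) + 1 by push_cast; ring, psiR_add_one hxN, ih,
      Finset.sum_range_succ]
    ring

lemma deriv_logGamma {x : ℝ} (hx : 0 < x) : deriv (Real.log ∘ Real.Gamma) x = psiR x := by
  rw [Function.comp_def, deriv.log (Real.differentiableAt_Gamma (real_ne_neg_nat hx))
    (Real.Gamma_pos_of_pos hx).ne', psiR]

lemma diff_logGamma {x : ℝ} (hx : 0 < x) : DifferentiableAt ℝ (Real.log ∘ Real.Gamma) x := by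
  exact ((Real.differentiableAt_Gamma (real_ne_neg_nat hx)).log
    (Real.Gamma_ne_zero (real_ne_neg_nat hx)))

lemma logGamma_rec {x : ℝ} (hx : 0 < x) :
    (Real.log ∘ Real.Gamma) (x + 1) = (Real.log ∘ Real.Gamma) x + Real.log x := by
  simp only [Function.comp_apply, Real.Gamma_add_one hx.ne',
    Real.log_mul hx.ne' (Real.Gamma_pos_of_pos hx).ne']
  ring

lemma psiR_bound {x : ℝ} (hx : 0 < x) :
    Real.log x ≤ psiR (x + 1) ∧ psiR (x + 1) ≤ Real.log (x + 1) := by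
  have hc : ConvexOn ℝ (Set.Ioi 0) (Real.log ∘ Real.Gamma) := Real.convexOn_log_Gamma
  constructor
  · have h := hc.slope_le_deriv (Set.mem_Ioi.mpr hx) (Set.mem_Ioi.mpr (by linarith : (0:ℝ) < x+1))
      (by linarith) (diff_logGamma (by linarith))
    rw [slope_def_field, show x + 1 - x = (1:ℝ) by ring, div_one, logGamma_rec hx,
      add_sub_cancel_left, deriv_logGamma (by linarith : (0:ℝ) < x + 1)] at h
    exact h
  · have h := hc.deriv_le_slope (Set.mem_Ioi.mpr (by linarith : (0:ℝ) < x+1))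
      (Set.mem_Ioi.mpr (by linarith : (0:ℝ) < x+2)) (by linarith)
      (diff_logGamma (by linarith : (0:ℝ) < x + 1))
    rw [slope_def_field, show x + 2 - (x+1) = (1:ℝ) by ring, div_one,
      show x + 2 = (x + 1) + 1 by ring, logGamma_rec (by linarith : (0:ℝ) < x+1),
      add_sub_cancel_left, deriv_logGamma (by linarith : (0:ℝ) < x + 1)] at h
    exact h

lemma tendsto_log_one_add {g : ℕ → ℝ} (hg : Tendsto g atTop (nhds 0)) :
    Tendsto (fun N => Real.log (1 + g N)) atTop (nhds 0) := by
  have h1 : Tendsto (fun N => 1 + g N) atTop (nhds 1) := by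
    simpa using tendsto_const_nhds.add hg
  have h2 := (Real.continuousAt_log one_ne_zero).tendsto.comp h1
  simpa [Real.log_one, Function.comp_def] using h2

lemma tendsto_inv_shift' (c : ℝ) : Tendsto (fun n : ℕ => ((n : ℝ) + c)⁻¹) atTop (nhds 0) :=
  (tendsto_atTop_add_const_right _ c tendsto_natCast_atTop_atTop).inv_tendsto_atTop

/-- `psiR (x+(N+1)) - log (x+N) → 0`. -/
lemma tendsto_psiR_sub_log {x : ℝ} (hx : 1 ≤ x) :
    Tendsto (fun N : ℕ => psiR (x + (N + 1)) - Real.log (x + N)) atTop (nhds 0) := by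
  have hupper : Tendsto (fun N : ℕ => Real.log (1 + (x + N)⁻¹)) atTop (nhds 0) := by
    apply tendsto_log_one_add
    have := tendsto_inv_shift' x
    simpa [add_comm] using this
  refine tendsto_of_tendsto_of_tendsto_of_le_of_le' tendsto_const_nhds hupper ?_ ?_ <;>
    (apply Eventually.of_forall; intro N) <;>
    (have hxN : (0:ℝ) < x + N := by
      have : (0:ℝ) ≤ N := Nat.cast_nonneg N
      linarith) <;>
    have hb := psiR_bound hxN
  · rw [show x + ((N:ℝ)+1) = (x + N) + 1 by ring]
    linarith [hb.1]
  · have h2 := hb.2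
    have heq : Real.log (x + N + 1) = Real.log (x + N) + Real.log (1 + (x + N)⁻¹) := by
      rw [← Real.log_mul hxN.ne' (by positivity)]
      congr 1
      field_simp
    rw [show x + ((N:ℝ)+1) = (x + N) + 1 by ring]
    rw [heq] at h2
    linarith

lemma harmonic_cast (n : ℕ) :
    ((harmonic n : ℚ) : ℝ) = ∑ i ∈ Finset.range n, (1:ℝ) / ((i:ℝ) + 1) := by
  rw [harmonic]
  push_cast
  refine Finset.sum_congr rfl fun i _ => ?_
  rw [one_div]

/-- The series representation of real digamma (shifted by γ). -/
lemma hasSum_psiR {x : ℝ} (hx : 1 ≤ x) :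
    HasSum (fun n : ℕ => 1 / ((n:ℝ) + 1) - 1 / (x + n))
      (psiR x + Real.eulerMascheroniConstant) := by
  have hx0 : (0:ℝ) < x := by linarith
  have hnn : ∀ n : ℕ, 0 ≤ 1 / ((n:ℝ) + 1) - 1 / (x + n) := by
    intro n
    have h1 : (0:ℝ) < (n:ℝ) + 1 := by positivity
    have h2 : ((n:ℝ) + 1) ≤ x + n := by linarith
    have := one_div_le_one_div_of_le h1 h2
    linarith
  refine (hasSum_iff_tendsto_nat_of_nonneg hnn _).mpr ?_
  rw [← tendsto_add_atTop_iff_nat 1]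
  -- pointwise identity for partial sums
  have hident : ∀ N : ℕ, (∑ i ∈ Finset.range (N + 1), (1 / ((i:ℝ) + 1) - 1 / (x + i))) =
      (((harmonic (N+1) : ℚ) : ℝ) - Real.log ((N:ℝ) + 1))
      - (psiR (x + (N + 1)) - Real.log (x + N))
      - (Real.log (x + N) - Real.log ((N:ℝ) + 1)) + psiR x := by
    intro N
    rw [Finset.sum_sub_distrib, ← harmonic_cast (N+1)]
    have hrec := psiR_add_nat hx0 (N + 1)
    push_cast at hrec
    have h5 : (∑ i ∈ Finset.range (N+1), (1:ℝ) / (x + i)) = psiR (x + ((N:ℝ)+1)) - psiR x := by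
      rw [hrec]; ring
    rw [h5]
    push_cast
    ring
  have h1 : Tendsto (fun N : ℕ => ((harmonic (N+1) : ℚ) : ℝ) - Real.log ((N:ℝ) + 1))
      atTop (nhds Real.eulerMascheroniConstant) := by
    have := (tendsto_add_atTop_iff_nat 1).mpr Real.tendsto_harmonic_sub_log
    refine this.congr fun N => ?_
    push_cast
    ring_nf
  have h2 := tendsto_psiR_sub_log hx
  have h3 : Tendsto (fun N : ℕ => Real.log (x + N) - Real.log ((N:ℝ) + 1)) atTop (nhds 0) := by
    have hg : Tendsto (fun N : ℕ => (x - 1) / ((N:ℝ) + 1)) atTop (nhds 0) := by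
      apply Tendsto.div_atTop tendsto_const_nhds
      exact tendsto_atTop_add_const_right _ 1 tendsto_natCast_atTop_atTop
    have := tendsto_log_one_add hg
    refine this.congr fun N => ?_
    have hN1 : (0:ℝ) < (N:ℝ) + 1 := by positivity
    have hxN : (0:ℝ) < x + N := by
      have : (0:ℝ) ≤ N := Nat.cast_nonneg N; linarith
    show Real.log (1 + (x - 1)/((N:ℝ)+1)) = _
    rw [show 1 + (x - 1)/((N:ℝ)+1) = (x + N)/((N:ℝ)+1) by field_simp; ring,
      Real.log_div hxN.ne' hN1.ne']
  have := (h1.sub h2).sub h3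
  simp only [sub_zero] at this
  have hfinal := this.add (tendsto_const_nhds (x := psiR x) (f := atTop))
  rw [show psiR x + Real.eulerMascheroniConstant =
    Real.eulerMascheroniConstant + psiR x from add_comm _ _]
  exact hfinal.congr fun N => (hident N).symm


/-! ### Complex series -/

def U : Set ℂ := {s : ℂ | 0 < s.re}

lemma isOpen_U : IsOpen U := isOpen_lt continuous_const Complex.continuous_re

lemma mem_U_ne {s : ℂ} (hs : s ∈ U) (n : ℕ) : (n : ℂ) + s ≠ 0 := by
  intro h
  have := congrArg Complex.re h
  simp only [Complex.add_re, Complex.natCast_re, Complex.zero_re] at this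
  have h2 : (0:ℝ) ≤ n := Nat.cast_nonneg n
  have h3 : 0 < s.re := hs
  linarith

noncomputable def fterm (n : ℕ) (s : ℂ) : ℂ := 1 / ((n : ℂ) + 1) - 1 / ((n : ℂ) + s)

noncomputable def h0 (s : ℂ) : ℂ := ∑' n : ℕ, fterm n s

lemma fterm_eq {n : ℕ} {s : ℂ} (hs : s ∈ U) :
    fterm n s = (s - 1) / (((n : ℂ) + 1) * ((n : ℂ) + s)) := by
  have h1 : ((n : ℂ) + 1) ≠ 0 := by
    intro h
    have := congrArg Complex.re h
    simp only [Complex.add_re, Complex.natCast_re, Complex.one_re, Complex.zero_re] at this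
    have h2 : (0:ℝ) ≤ n := Nat.cast_nonneg n
    linarith
  have h2 : ((n : ℂ) + s) ≠ 0 := mem_U_ne hs n
  rw [fterm, div_sub_div _ _ h1 h2]
  congr 1
  ring

lemma norm_add_ge {s : ℂ} (n : ℕ) (hs : s ∈ U) : (n : ℝ) + s.re ≤ ‖(n : ℂ) + s‖ := by
  have := Complex.abs_re_le_norm ((n : ℂ) + s)
  have h2 : ((n : ℂ) + s).re = (n : ℝ) + s.re := by
    simp [Complex.add_re]
  rw [h2] at this
  calc (n : ℝ) + s.re ≤ |(n : ℝ) + s.re| := le_abs_self _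
  _ ≤ ‖(n:ℂ) + s‖ := this

lemma tlu_h0 : TendstoLocallyUniformlyOn
    (fun (t : Finset ℕ) (s : ℂ) => ∑ n ∈ t, fterm n s) h0 atTop U := by
  rw [tendstoLocallyUniformlyOn_iff_forall_isCompact isOpen_U]
  intro K hKU hK
  rcases K.eq_empty_or_nonempty with rfl | hne
  · simp [TendstoUniformlyOn]
  obtain ⟨sm, hsmK, hsm'⟩ := hK.exists_isMinOn hne (Complex.continuous_re.continuousOn)
  have hsm : ∀ x ∈ K, sm.re ≤ x.re := fun x hx => hsm' hx
  set δ : ℝ := min (sm.re) 1 with hδdef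
  have hδ0 : 0 < δ := lt_min (hKU hsmK) one_pos
  have hδ1 : δ ≤ 1 := min_le_right _ _
  obtain ⟨R, hR⟩ := hK.exists_bound_of_continuousOn continuous_id.continuousOn
  have hR0 : 0 ≤ R := by
    obtain ⟨w, hw⟩ := hne
    exact le_trans (norm_nonneg _) (hR w hw)
  apply tendstoUniformlyOn_tsum
    (u := fun n : ℕ => (R + 1) / δ * (1 / ((n : ℝ) + 1) ^ 2))
  · apply Summable.mul_left
    have h := (summable_nat_add_iff (f := fun n : ℕ => 1 / (n : ℝ) ^ 2) 1).mpr
      (Real.summable_one_div_nat_pow.mpr one_lt_two)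
    refine h.congr fun n => ?_
    push_cast
    ring
  · intro n s hsK
    have hsU : s ∈ U := hKU hsK
    have hs1 : δ ≤ s.re := le_trans (min_le_left _ _) (hsm s hsK)
    have hn1 : (0:ℝ) < (n : ℝ) + 1 := by positivity
    have hnd : (0:ℝ) < (n : ℝ) + δ := by positivity
    have hnorm2 : (n : ℝ) + δ ≤ ‖(n : ℂ) + s‖ := by
      refine le_trans ?_ (norm_add_ge n hsU)
      linarith
    have hnorm1 : ((n : ℝ) + 1) ≤ ‖(n : ℂ) + 1‖ := by
      have := norm_add_ge (s := 1) n (by simp [U])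
      simpa using this
    rw [fterm_eq hsU, norm_div, norm_mul]
    have hnum : ‖s - 1‖ ≤ R + 1 := by
      calc ‖s - 1‖ ≤ ‖s‖ + ‖(1:ℂ)‖ := norm_sub_le _ _
      _ ≤ R + 1 := by
          have := hR s hsK
          simp only [id] at this
          simp only [norm_one]
          linarith
    have hden : ((n : ℝ) + 1) * ((n : ℝ) + δ) ≤ ‖(n : ℂ) + 1‖ * ‖(n : ℂ) + s‖ :=
      mul_le_mul hnorm1 hnorm2 (le_of_lt hnd) (norm_nonneg _)
    have hden0 : (0:ℝ) < ((n : ℝ) + 1) * ((n : ℝ) + δ) := by positivity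
    calc ‖s - 1‖ / (‖(n : ℂ) + 1‖ * ‖(n : ℂ) + s‖)
        ≤ (R + 1) / (((n : ℝ) + 1) * ((n : ℝ) + δ)) := by
          apply div_le_div₀ (by linarith) hnum hden0 hden
    _ ≤ (R + 1) / δ * (1 / ((n : ℝ) + 1) ^ 2) := by
          rw [div_mul_div_comm, mul_one]
          apply div_le_div₀ (by linarith) (le_refl _) (by positivity)
          nlinarith [mul_nonneg (mul_nonneg (by positivity : (0:ℝ) ≤ (n:ℝ)+1)
            (Nat.cast_nonneg n : (0:ℝ) ≤ (n:ℝ))) (sub_nonneg.mpr hδ1)]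

lemma partial_diff (t : Finset ℕ) : DifferentiableOn ℂ
    (fun s : ℂ => ∑ n ∈ t, fterm n s) U := by
  apply DifferentiableOn.fun_sum
  intro n _
  intro s hs
  apply DifferentiableAt.differentiableWithinAt
  have : DifferentiableAt ℂ (fun s : ℂ => 1 / ((n : ℂ) + s)) s := by
    simp only [one_div]
    exact (DifferentiableAt.add (differentiableAt_const _) differentiableAt_id).inv (mem_U_ne hs n)
  have h2 := (differentiableAt_const (1 / ((n:ℂ)+1))).sub this
  unfold fterm
  simpa [one_div] using h2

lemma h0_diff : DifferentiableOn ℂ h0 U :=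
  tlu_h0.differentiableOn (Eventually.of_forall partial_diff) isOpen_U

lemma deriv_partial (t : Finset ℕ) {s : ℂ} (hs : s ∈ U) :
    deriv (fun s : ℂ => ∑ n ∈ t, fterm n s) s = ∑ n ∈ t, (((n : ℂ) + s) ^ 2)⁻¹ := by
  have h : HasDerivAt (fun s : ℂ => ∑ n ∈ t, fterm n s)
      (∑ n ∈ t, (((n : ℂ) + s) ^ 2)⁻¹) s := by
    apply HasDerivAt.fun_sum
    intro n _
    have h1 : HasDerivAt (fun s : ℂ => (n : ℂ) + s) 1 s := by
      simpa using (hasDerivAt_id s).const_add ((n : ℂ))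
    have h2 : HasDerivAt (fun s : ℂ => ((n : ℂ) + s)⁻¹)
        (-1 / ((n : ℂ) + s) ^ 2) s := by
      have := h1.inv (mem_U_ne hs n)
      exact this
    have h3 : HasDerivAt (fun s : ℂ => fterm n s)
        (0 - (-1 / ((n : ℂ) + s) ^ 2)) s := by
      simp only [fterm, one_div]
      exact (hasDerivAt_const s _).sub h2
    exact h3.congr_deriv (by ring)
  exact h.deriv

lemma hasSum_deriv_h0 {s : ℂ} (hs : s ∈ U) :
    HasSum (fun n : ℕ => (((n : ℂ) + s) ^ 2)⁻¹) (deriv h0 s) := by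
  have h := (tlu_h0.deriv (Eventually.of_forall partial_diff) isOpen_U).tendsto_at hs
  refine h.congr fun t => ?_
  exact deriv_partial t hs


lemma mem_U_ne_negnat {s : ℂ} (hs : s ∈ U) : ∀ m : ℕ, s ≠ -(m : ℂ) := by
  intro m h
  have := congrArg Complex.re h
  simp only [Complex.neg_re, Complex.natCast_re] at this
  have h2 : (0:ℝ) ≤ m := Nat.cast_nonneg m
  have h3 : 0 < s.re := hs
  linarith

lemma diffOn_Gamma : DifferentiableOn ℂ Complex.Gamma U := fun s hs =>
  (Complex.differentiableAt_Gamma s (mem_U_ne_negnat hs)).differentiableWithinAt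

lemma analytic_Gamma : AnalyticOnNhd ℂ Complex.Gamma U :=
  diffOn_Gamma.analyticOnNhd isOpen_U

lemma analytic_digamma : AnalyticOnNhd ℂ digamma U := fun s hs =>
  ((analytic_Gamma.deriv s hs).div (analytic_Gamma s hs)
    (Complex.Gamma_ne_zero (mem_U_ne_negnat hs)))

lemma analytic_h : AnalyticOnNhd ℂ
    (fun s => -((Real.eulerMascheroniConstant : ℝ) : ℂ) + h0 s) U := fun s hs =>
  analyticAt_const.add ((h0_diff.analyticOnNhd isOpen_U) s hs)

lemma h0_real {x : ℝ} (hx : 1 ≤ x) :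
    h0 ((x : ℝ) : ℂ) = (((psiR x + Real.eulerMascheroniConstant : ℝ)) : ℂ) := by
  have hs := Complex.ofRealCLM.hasSum (hasSum_psiR hx)
  have heq : (fun n : ℕ => fterm n ((x : ℝ) : ℂ)) =
      fun n : ℕ => Complex.ofRealCLM (1 / ((n:ℝ) + 1) - 1 / (x + n)) := by
    funext n
    simp only [Complex.ofRealCLM_apply, fterm]
    push_cast
    ring
  rw [h0, heq]
  simpa using hs.tsum_eq

lemma digamma_eqOn : Set.EqOn digamma
    (fun s => -((Real.eulerMascheroniConstant : ℝ) : ℂ) + h0 s) U := by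
  apply AnalyticOnNhd.eqOn_of_preconnected_of_frequently_eq analytic_digamma analytic_h
    ((convex_halfSpace_re_gt 0).isPreconnected) (show (2:ℂ) ∈ U by simp [U])
  have hseq : Tendsto (fun n : ℕ => (((2 + 1/((n:ℝ)+1) : ℝ)) : ℂ)) atTop
      (nhdsWithin (2:ℂ) {(2:ℂ)}ᶜ) := by
    rw [tendsto_nhdsWithin_iff]
    constructor
    · have hr : Tendsto (fun n : ℕ => (2 + 1/((n:ℝ)+1) : ℝ)) atTop (nhds 2) := by
        simpa [one_div] using tendsto_const_nhds.add (tendsto_inv_shift' (1:ℝ))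
      have := (Complex.continuous_ofReal.tendsto 2).comp hr
      simpa [Function.comp_def] using this
    · apply Eventually.of_forall
      intro n
      simp only [Set.mem_compl_iff, Set.mem_singleton_iff]
      intro h
      rw [show (2:ℂ) = ((2:ℝ):ℂ) by norm_num] at h
      have := Complex.ofReal_inj.mp h
      have h1 : (0:ℝ) < 1/((n:ℝ)+1) := by positivity
      linarith
  refine hseq.frequently (Eventually.of_forall fun n => ?_).frequently
  have hy : (1:ℝ) ≤ 2 + 1/((n:ℝ)+1) := by
    have : (0:ℝ) < 1/((n:ℝ)+1) := by positivity
    linarith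
  rw [digamma_real (by linarith : (0:ℝ) < 2 + 1/((n:ℝ)+1)), h0_real hy]
  push_cast
  ring

lemma trigamma_eq {s : ℂ} (hs : s ∈ U) : trigamma s = deriv h0 s := by
  rw [trigamma]
  have hev : digamma =ᶠ[nhds s]
      (fun w => -((Real.eulerMascheroniConstant : ℝ) : ℂ) + h0 w) :=
    digamma_eqOn.eventuallyEq_of_mem (isOpen_U.mem_nhds hs)
  rw [hev.deriv_eq, deriv_const_add]

lemma trigamma_real {x : ℝ} (hx : 1 ≤ x) :
    trigamma (1 + (x : ℂ)) = ((S x : ℝ) : ℂ) := by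
  have hmem : (1 + (x:ℂ)) ∈ U := by
    simp only [U, Set.mem_setOf_eq, Complex.add_re, Complex.one_re, Complex.ofReal_re]
    linarith
  have h1 := hasSum_deriv_h0 hmem
  have h2 := Complex.ofRealCLM.hasSum (hasSum_S hx)
  have heq : (fun n : ℕ => (((n:ℂ) + (1 + (x:ℂ))) ^ 2)⁻¹) =
      fun n : ℕ => Complex.ofRealCLM (((a x n) ^ 2)⁻¹) := by
    funext n
    simp only [Complex.ofRealCLM_apply, a]
    push_cast
    ring_nf
  have h3 : HasSum (fun n : ℕ => (((n:ℂ) + (1 + (x:ℂ))) ^ 2)⁻¹) ((S x : ℝ) : ℂ) := by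
    rw [heq]
    simpa using h2
  rw [trigamma_eq hmem, h1.unique h3]



/-! ### Final assembly -/

lemma tendsto_log_one_add_filter {ι : Type*} {l : Filter ι} {g : ι → ℝ}
    (hg : Tendsto g l (nhds 0)) : Tendsto (fun i => Real.log (1 + g i)) l (nhds 0) := by
  have h1 : Tendsto (fun i => 1 + g i) l (nhds 1) := by simpa using tendsto_const_nhds.add hg
  have h2 := (Real.continuousAt_log one_ne_zero).tendsto.comp h1
  simpa [Real.log_one, Function.comp_def] using h2

lemma tendsto_psi_log : Tendsto (fun x : ℝ => psiR (1 + x) - Real.log x) atTop (nhds 0) := by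
  have hupper : Tendsto (fun x : ℝ => Real.log (1 + x⁻¹)) atTop (nhds 0) :=
    tendsto_log_one_add_filter tendsto_inv_atTop_zero
  refine tendsto_of_tendsto_of_tendsto_of_le_of_le' tendsto_const_nhds hupper ?_ ?_ <;>
    filter_upwards [eventually_gt_atTop (0:ℝ)] with x hx <;>
    rw [show (1:ℝ) + x = x + 1 by ring]
  · linarith [(psiR_bound hx).1]
  · have hb := (psiR_bound hx).2
    have heq : Real.log (x + 1) = Real.log x + Real.log (1 + x⁻¹) := by
      rw [← Real.log_mul hx.ne' (by positivity)]
      congr 1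
      field_simp
    linarith

noncomputable def NR (x : ℝ) : ℝ := -x * (2 * S x * x ^ 2 - 2 * x + 1)

noncomputable def DR (γ α : ℝ) (x : ℝ) : ℝ :=
  γ * (4 * Real.pi * α - γ * (psiR (1 + x) - Real.log x - 1 / (2 * x)
    - (-Real.eulerMascheroniConstant) - (1 - Real.eulerMascheroniConstant)))

lemma relTrace_real (γ α : ℝ) {x : ℝ} (hx : 1 ≤ x) :
    relTrace γ α ((x : ℝ) : ℂ) = ((NR x / DR γ α x : ℝ) : ℂ) := by
  have hx0 : (0:ℝ) < x := by linarith
  have h1x : (0:ℝ) < 1 + x := by linarith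
  rw [relTrace, trigamma_real hx,
    show (1:ℂ) + (x:ℂ) = (((1 + x : ℝ)) : ℂ) by push_cast; ring,
    digamma_real h1x, digamma_one, digamma_two, ← Complex.ofReal_log hx0.le]
  rw [NR, DR]
  push_cast
  ring

lemma denom_tendsto (γ α : ℝ) : Tendsto (DR γ α) atTop
    (nhds (γ * (4 * Real.pi * α - γ * (2 * Real.eulerMascheroniConstant - 1)))) := by
  have h2 : Tendsto (fun x : ℝ => 1 / (2 * x)) atTop (nhds 0) := by
    have := tendsto_inv_atTop_zero.const_mul (1/2 : ℝ)
    simp only [mul_zero] at this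
    refine this.congr fun x => ?_
    rw [one_div (2 * x), mul_inv]
    ring
  have h3 := ((tendsto_psi_log.sub h2).sub_const (-Real.eulerMascheroniConstant)).sub_const
    (1 - Real.eulerMascheroniConstant)
  have hinner : Tendsto (fun x : ℝ => psiR (1 + x) - Real.log x - 1 / (2 * x)
      - (-Real.eulerMascheroniConstant) - (1 - Real.eulerMascheroniConstant)) atTop
      (nhds (2 * Real.eulerMascheroniConstant - 1)) := by
    rw [show (2 * Real.eulerMascheroniConstant - 1 : ℝ) =
      0 - 0 - (-Real.eulerMascheroniConstant) - (1 - Real.eulerMascheroniConstant) by ring]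
    exact h3.congr fun x => by ring
  have hfull : Tendsto (fun x : ℝ => γ * (4 * Real.pi * α
      - γ * (psiR (1 + x) - Real.log x - 1 / (2 * x)
      - (-Real.eulerMascheroniConstant) - (1 - Real.eulerMascheroniConstant)))) atTop
      (nhds (γ * (4 * Real.pi * α - γ * (2 * Real.eulerMascheroniConstant - 1)))) :=
    ((tendsto_const_nhds (x := 4 * Real.pi * α) (f := atTop)).sub
      (hinner.const_mul γ)).const_mul γ
  exact hfull.congr fun x => by rw [DR]

lemma ratio_tendsto (γ α : ℝ) (hγ : 0 < γ)
    (hne : γ - 2 * Real.eulerMascheroniConstant * γ + 4 * Real.pi * α ≠ 0) :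
    Tendsto (fun x => NR x / DR γ α x) atTop
      (nhds (-1 / (3 * γ * (γ - 2 * Real.eulerMascheroniConstant * γ + 4 * Real.pi * α)))) := by
  have hnum : Tendsto NR atTop (nhds (-(1/3))) := by
    refine num_tendsto.neg.congr fun x => ?_
    rw [NR]; ring
  have hd := denom_tendsto γ α
  rw [show γ * (4 * Real.pi * α - γ * (2 * Real.eulerMascheroniConstant - 1)) =
    γ * (γ - 2 * Real.eulerMascheroniConstant * γ + 4 * Real.pi * α) by ring] at hd
  have hDne : γ * (γ - 2 * Real.eulerMascheroniConstant * γ + 4 * Real.pi * α) ≠ 0 :=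
    mul_ne_zero hγ.ne' hne
  have hdiv := hnum.div hd hDne
  have hval : (-(1/3 : ℝ)) / (γ * (γ - 2 * Real.eulerMascheroniConstant * γ + 4 * Real.pi * α))
      = -1 / (3 * γ * (γ - 2 * Real.eulerMascheroniConstant * γ + 4 * Real.pi * α)) := by
    field_simp
  rwa [hval] at hdiv

end Stmt9

open Stmt9 in
theorem stmt9 (γ α : ℝ) (hγ : 0 < γ)
    (hne : γ - 2 * Real.eulerMascheroniConstant * γ + 4 * Real.pi * α ≠ 0) :
    Tendsto (fun l : ℝ => relTrace γ α ((γ : ℂ) / (2 * (Real.sqrt (-l) : ℂ))))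
      (nhdsWithin 0 (Set.Iio 0))
      (nhds ((-1 / (3 * γ * (γ - 2 * Real.eulerMascheroniConstant * γ + 4 * Real.pi * α)) : ℝ) : ℂ)) := by
  have hsqrt : Tendsto (fun l : ℝ => 2 * Real.sqrt (-l)) (nhdsWithin 0 (Set.Iio 0))
      (nhdsWithin 0 (Set.Ioi 0)) := by
    rw [tendsto_nhdsWithin_iff]
    constructor
    · have hc : Continuous (fun l : ℝ => 2 * Real.sqrt (-l)) :=
        continuous_const.mul (Real.continuous_sqrt.comp continuous_neg)
      have h0 := hc.tendsto 0
      simp only [neg_zero, Real.sqrt_zero, mul_zero] at h0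
      exact h0.mono_left nhdsWithin_le_nhds
    · filter_upwards [self_mem_nhdsWithin] with l hl
      have hl0 : l < 0 := hl
      have : (0:ℝ) < Real.sqrt (-l) := Real.sqrt_pos.mpr (by linarith)
      exact Set.mem_Ioi.mpr (by positivity)
  have hφ : Tendsto (fun l : ℝ => γ / (2 * Real.sqrt (-l))) (nhdsWithin 0 (Set.Iio 0)) atTop := by
    have h1 := tendsto_inv_nhdsGT_zero.comp hsqrt
    have h2 := h1.const_mul_atTop hγ
    refine h2.congr fun l => ?_
    rw [div_eq_mul_inv]
    rfl
  have hlim := ratio_tendsto γ α hγ hne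
  have hcast := (Complex.continuous_ofReal.tendsto _).comp hlim
  have hmain : Tendsto (fun x : ℝ => relTrace γ α ((x : ℝ) : ℂ)) atTop
      (nhds ((-1 / (3 * γ * (γ - 2 * Real.eulerMascheroniConstant * γ + 4 * Real.pi * α)) : ℝ) : ℂ)) := by
    refine hcast.congr' ?_
    filter_upwards [eventually_ge_atTop (1:ℝ)] with x hx
    exact (relTrace_real γ α hx).symm
  refine (hmain.comp hφ).congr fun l => ?_
  show relTrace γ α _ = _
  congr 1
  push_cast
  ring
end

section
/- For x > 0, the function ψ(1+x) - log x - 1/(2x) is strictly increasing in x and tends to 0 as x → +∞; in particular ψ(1+x) < log x + 1/(2x) for all x > 0. -/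
open Filter

/-- The real digamma function `ψ(x) = Γ'(x)/Γ(x)`. -/
noncomputable def realDigamma (x : ℝ) : ℝ := deriv Real.Gamma x / Real.Gamma x

namespace Stmt17Aux

open Real Set Topology

local notation "γ" => Real.eulerMascheroniConstant

noncomputable def f : ℝ → ℝ := Real.log ∘ Real.Gamma

lemma hne {x : ℝ} (hx : 0 < x) : ∀ m : ℕ, x ≠ -m :=
  fun m ↦ ne_of_gt (lt_of_le_of_lt (neg_nonpos.mpr (Nat.cast_nonneg m)) hx)

lemma hder {x : ℝ} (hx : 0 < x) : DifferentiableAt ℝ f x := by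
  exact (Real.differentiableAt_Gamma (hne hx)).log (Real.Gamma_ne_zero (hne hx))

lemma digamma_eq {x : ℝ} (hx : 0 < x) : realDigamma x = deriv f x := by
  rw [f, Function.comp_def, deriv.log (Real.differentiableAt_Gamma (hne hx)) (Real.Gamma_ne_zero (hne hx)), realDigamma]

lemma hasDerivAt_f {x : ℝ} (hx : 0 < x) : HasDerivAt f (realDigamma x) x := by
  rw [digamma_eq hx]; exact (hder hx).hasDerivAt

lemma rec {x : ℝ} (hx : 0 < x) : realDigamma (x + 1) = realDigamma x + 1 / x := by
  rw [digamma_eq (by linarith), digamma_eq hx]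
  rw [← deriv_comp_add_const, one_div, ← Real.deriv_log,
    ← deriv_add (hder hx) (Real.differentiableAt_log hx.ne')]
  apply Filter.EventuallyEq.deriv_eq
  filter_upwards [eventually_gt_nhds hx] with y hy
  simp only [f, Function.comp_apply, Pi.add_apply, Real.Gamma_add_one hy.ne',
    Real.log_mul hy.ne' (Real.Gamma_pos_of_pos hy).ne', add_comm]

lemma lb {x : ℝ} (hx : 0 < x) : Real.log x ≤ realDigamma (1 + x) := by
  rw [digamma_eq (by linarith)]
  have hc : ConvexOn ℝ (Set.Ioi 0) f := Real.convexOn_log_Gamma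
  refine (le_of_eq ?_).trans <| hc.slope_le_deriv (Set.mem_Ioi.mpr hx)
    (Set.mem_Ioi.mpr (by linarith)) (by linarith) (hder (by linarith))
  rw [slope_def_field, show 1 + x - x = (1 : ℝ) by ring, div_one]
  simp only [f, Function.comp_apply]
  rw [show 1 + x = x + 1 by ring, Real.Gamma_add_one hx.ne',
    Real.log_mul hx.ne' (Real.Gamma_pos_of_pos hx).ne', add_sub_cancel_right]

lemma ub {x : ℝ} (hx : 0 < x) : realDigamma (1 + x) ≤ Real.log (1 + x) := by
  rw [digamma_eq (by linarith)]
  have hc : ConvexOn ℝ (Set.Ioi 0) f := Real.convexOn_log_Gamma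
  refine (hc.deriv_le_slope (Set.mem_Ioi.mpr (by linarith : (0:ℝ) < 1 + x))
    (Set.mem_Ioi.mpr (by linarith : (0:ℝ) < 2 + x)) (by linarith) (hder (by linarith))).trans
    (le_of_eq ?_)
  rw [slope_def_field, show 2 + x - (1 + x) = (1 : ℝ) by ring, div_one]
  simp only [f, Function.comp_apply]
  rw [show 2 + x = (1 + x) + 1 by ring, Real.Gamma_add_one (by positivity),
    Real.log_mul (by positivity) (Real.Gamma_pos_of_pos (by positivity)).ne', add_sub_cancel_right]


lemma sumsq : Summable (fun k : ℕ => 1 / ((k:ℝ)+1)^2) := by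
  have h : Summable (fun k : ℕ => 1 / ((k:ℝ))^2) := summable_one_div_nat_pow.mpr one_lt_two
  have := (summable_nat_add_iff 1).mpr h
  simpa using this

section
variable {x : ℝ}

lemma sumterm (hx : 0 < x) : Summable (fun k : ℕ => 1/((k:ℝ)+1) - 1/(1+x+k)) := by
  apply Summable.of_nonneg_of_le (fun k => ?_) (fun k => ?_) (sumsq.mul_left x)
  · have h1 : (0:ℝ) < (k:ℝ)+1 := by positivity
    have h2 : (0:ℝ) < 1+x+k := by positivity
    rw [sub_nonneg, div_le_div_iff₀ h2 h1]
    nlinarith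
  · have h1 : (0:ℝ) < (k:ℝ)+1 := by positivity
    have h2 : (0:ℝ) < 1+x+k := by positivity
    rw [div_sub_div _ _ h1.ne' h2.ne', mul_one_div,
      div_le_div_iff₀ (by positivity) (by positivity)]
    nlinarith [mul_nonneg (mul_nonneg hx.le hx.le) h1.le, sq_nonneg ((k:ℝ)+1)]

lemma sumtri (hx : 0 < x) : Summable (fun k : ℕ => 1/(1+x+k)^2) := by
  apply Summable.of_nonneg_of_le (fun k => by positivity) (fun k => ?_) sumsq
  have h1 : (0:ℝ) < (k:ℝ)+1 := by positivity
  have h2 : (0:ℝ) < 1+x+k := by positivity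
  rw [div_le_div_iff₀ (by positivity) (by positivity)]
  nlinarith
end


lemma psum {x : ℝ} (hx : 0 < x) (n : ℕ) :
    realDigamma (1 + x + n) = realDigamma (1 + x) + ∑ k ∈ Finset.range n, 1/(1+x+k) := by
  induction n with
  | zero => simp
  | succ n ih =>
    have h1 : (0:ℝ) < 1 + x + n := by positivity
    have : (1 : ℝ) + x + (n+1 : ℕ) = (1 + x + n) + 1 := by push_cast; ring
    rw [this, rec h1, ih, Finset.sum_range_succ]
    push_cast; ring


lemma dlim {x : ℝ} (hx : 0 < x) :
    Tendsto (fun n : ℕ => Real.log (1 + x + n) - Real.log (x + n)) atTop (𝓝 0) := by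
  have h1 : Tendsto (fun n : ℕ => x + (n:ℝ)) atTop atTop :=
    tendsto_atTop_add_const_left _ _ tendsto_natCast_atTop_atTop
  have h2 : Tendsto (fun n : ℕ => 1 + 1/(x + (n:ℝ))) atTop (𝓝 1) := by
    have h0 : Tendsto (fun n : ℕ => 1/(x + (n:ℝ))) atTop (𝓝 0) := by
      simp only [one_div]; exact h1.inv_tendsto_atTop
    simpa using tendsto_const_nhds.add h0
  have h3 := (Real.continuousAt_log one_ne_zero).tendsto.comp h2
  rw [Real.log_one] at h3
  apply h3.congr
  intro n
  have hp : (0:ℝ) < x + n := by positivity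
  simp only [Function.comp_apply]
  rw [← Real.log_div (by positivity) hp.ne']
  congr 1
  field_simp
  ring

lemma tendsto_F {x : ℝ} (hx : 0 < x) :
    Tendsto (fun n : ℕ => Real.log (x + n) - ∑ k ∈ Finset.range n, 1/(1+x+(k:ℝ)))
      atTop (𝓝 (realDigamma (1 + x))) := by
  set ψ := realDigamma (1 + x)
  have key : ∀ n : ℕ, ψ - (Real.log (1 + x + n) - Real.log (x + n)) ≤
      Real.log (x + n) - ∑ k ∈ Finset.range n, 1/(1+x+(k:ℝ)) ∧
      Real.log (x + n) - ∑ k ∈ Finset.range n, 1/(1+x+(k:ℝ)) ≤ ψ := by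
    intro n
    have hxn : (0:ℝ) < x + n := by positivity
    have hlb := lb hxn
    have hub := ub hxn
    rw [show 1 + (x + (n:ℝ)) = 1 + x + n by ring, psum hx n] at hlb hub
    constructor <;> [linarith; linarith]
  have hlow : Tendsto (fun n : ℕ => ψ - (Real.log (1 + x + n) - Real.log (x + n)))
      atTop (𝓝 ψ) := by
    simpa using tendsto_const_nhds.sub (dlim hx)
  exact tendsto_of_tendsto_of_tendsto_of_le_of_le hlow tendsto_const_nhds
    (fun n => (key n).1) (fun n => (key n).2)

lemma series {x : ℝ} (hx : 0 < x) :
    realDigamma (1 + x) = -γ + ∑' k : ℕ, (1/((k:ℝ)+1) - 1/(1+x+k)) := by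
  refine tendsto_nhds_unique (tendsto_F hx) ?_
  have h1 : Tendsto (fun n : ℕ => Real.log (x + n) - Real.log n) atTop (𝓝 0) := by
    have h1' : Tendsto (fun n : ℕ => (n:ℝ)) atTop atTop := tendsto_natCast_atTop_atTop
    have h2 : Tendsto (fun n : ℕ => x/(n:ℝ) + 1) atTop (𝓝 1) := by
      simpa using ((tendsto_const_nhds.div_atTop h1').add (tendsto_const_nhds : Tendsto (fun _ : ℕ => (1:ℝ)) atTop _))
    have h3 := (Real.continuousAt_log one_ne_zero).tendsto.comp h2
    rw [Real.log_one] at h3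
    apply h3.congr'
    filter_upwards [eventually_gt_atTop 0] with n hn
    have hn' : (0:ℝ) < n := by exact_mod_cast hn
    simp only [Function.comp_apply]
    rw [← Real.log_div (by positivity) hn'.ne']
    congr 1
    field_simp
  have h2 : Tendsto (fun n : ℕ => ((harmonic n : ℝ)) - Real.log n) atTop (𝓝 γ) :=
    Real.tendsto_harmonic_sub_log
  have h3 : Tendsto (fun n : ℕ => ∑ k ∈ Finset.range n, (1/((k:ℝ)+1) - 1/(1+x+k)))
      atTop (𝓝 (∑' k : ℕ, (1/((k:ℝ)+1) - 1/(1+x+k)))) :=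
    (sumterm hx).hasSum.tendsto_sum_nat
  have := (h1.sub h2).add h3
  rw [zero_sub] at this
  apply this.congr
  intro n
  have hh : ((harmonic n : ℝ)) = ∑ k ∈ Finset.range n, 1/((k:ℝ)+1) := by
    rw [harmonic]
    push_cast
    simp [one_div]
  rw [hh, Finset.sum_sub_distrib]
  ring

lemma sumsq' : Summable (fun k : ℕ => 1 / ((k:ℝ)+1)^2) := by
  have h : Summable (fun k : ℕ => 1 / ((k:ℝ))^2) := summable_one_div_nat_pow.mpr one_lt_two
  simpa using (summable_nat_add_iff 1).mpr h

lemma sumtri' {x : ℝ} (hx : 0 < x) : Summable (fun k : ℕ => 1/(1+x+(k:ℝ))^2) := by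
  apply Summable.of_nonneg_of_le (fun k => by positivity) (fun k => ?_) sumsq'
  have h1 : (0:ℝ) < (k:ℝ)+1 := by positivity
  rw [div_le_div_iff₀ (by positivity) (by positivity)]
  nlinarith [Nat.cast_nonneg (α := ℝ) k]

lemma hasDerivAt_term (k : ℕ) {y : ℝ} (hy : 0 < y) :
    HasDerivAt (fun y : ℝ => 1/((k:ℝ)+1) - 1/(1+y+k)) (1/(1+y+(k:ℝ))^2) y := by
  have h : HasDerivAt (fun y : ℝ => 1+y+(k:ℝ)) 1 y := by
    simpa using ((hasDerivAt_id y).const_add (1:ℝ)).add_const (k:ℝ)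
  have hne : (1+y+(k:ℝ)) ≠ 0 := by positivity
  have h2 := h.inv hne
  have h3 := h2.const_sub (1/((k:ℝ)+1))
  convert h3 using 1
  · rfl
  · rfl
  · ext z; simp only [one_div]; rfl
  · ring

lemma hasDerivAt_S {x : ℝ} (hx : 0 < x) :
    HasDerivAt (fun y : ℝ => ∑' k : ℕ, (1/((k:ℝ)+1) - 1/(1+y+k)))
      (∑' k : ℕ, 1/(1+x+(k:ℝ))^2) x := by
  refine hasDerivAt_tsum_of_isPreconnected sumsq' isOpen_Ioi isPreconnected_Ioi
    (fun k y hy => hasDerivAt_term k hy) (fun k y hy => ?_) (mem_Ioi.mpr one_pos) ?_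
    (mem_Ioi.mpr hx)
  · have hy : (0:ℝ) < y := hy
    rw [Real.norm_eq_abs, abs_of_nonneg (by positivity),
      div_le_div_iff₀ (by positivity) (by positivity)]
    nlinarith [Nat.cast_nonneg (α := ℝ) k]
  · -- summable at y₀ = 1
    apply Summable.of_nonneg_of_le (fun k => ?_) (fun k => ?_) sumsq'
    · have h1 : (0:ℝ) < (k:ℝ)+1 := by positivity
      have h2 : (0:ℝ) < 1+1+(k:ℝ) := by positivity
      rw [sub_nonneg, div_le_div_iff₀ h2 h1]
      nlinarith
    · have h1 : (0:ℝ) < (k:ℝ)+1 := by positivity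
      have h2 : (0:ℝ) < 1+1+(k:ℝ) := by positivity
      rw [div_sub_div _ _ h1.ne' h2.ne', div_le_div_iff₀ (by positivity) (by positivity)]
      nlinarith [sq_nonneg ((k:ℝ)+1)]

lemma trapezoid {a : ℝ} (ha : 0 < a) : 1/a - 1/(a+1) ≤ (1/a^2 + 1/(a+1)^2)/2 := by
  rw [← sub_nonneg]
  have h : (1/a^2 + 1/(a+1)^2)/2 - (1/a - 1/(a+1)) = 1/(2*a^2*(a+1)^2) := by
    field_simp
    ring
  rw [h]
  positivity

lemma telescope {x : ℝ} (hx : 0 < x) :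
    HasSum (fun k : ℕ => 1/(1+x+(k:ℝ)) - 1/(1+x+((k:ℝ)+1))) (1/(1+x)) := by
  have ha : Tendsto (fun n : ℕ => 1 + x + (n:ℝ)) atTop atTop :=
    tendsto_atTop_add_const_left _ _ tendsto_natCast_atTop_atTop
  have hb : Tendsto (fun n : ℕ => 1/(1+x+(n:ℝ))) atTop (𝓝 0) := by
    simp only [one_div]
    exact ha.inv_tendsto_atTop
  have hnn : ∀ k : ℕ, 0 ≤ 1/(1+x+(k:ℝ)) - 1/(1+x+((k:ℝ)+1)) := by
    intro k
    have h1 : (0:ℝ) < 1+x+(k:ℝ) := by positivity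
    have h2 : (0:ℝ) < 1+x+((k:ℝ)+1) := by positivity
    rw [sub_nonneg, div_le_div_iff₀ h2 h1]
    nlinarith
  rw [hasSum_iff_tendsto_nat_of_nonneg hnn]
  have key : ∀ n : ℕ, ∑ k ∈ Finset.range n, (1/(1+x+(k:ℝ)) - 1/(1+x+((k:ℝ)+1)))
      = 1/(1+x) - 1/(1+x+(n:ℝ)) := by
    intro n
    induction n with
    | zero => simp
    | succ n ih => rw [Finset.sum_range_succ, ih]; push_cast; ring
  simp only [key]
  simpa using tendsto_const_nhds.sub hb

lemma trigamma_lb {x : ℝ} (hx : 0 < x) :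
    1/x - 1/(2*x^2) < ∑' k : ℕ, 1/(1+x+(k:ℝ))^2 := by
  set T := ∑' k : ℕ, 1/(1+x+(k:ℝ))^2 with hT
  have hsum := sumtri' hx
  have hshift : ∑' k : ℕ, 1/(1+x+((k:ℝ)+1))^2 = T - 1/(1+x)^2 := by
    have h := hsum.tsum_eq_zero_add
    have h2 : ∑' k : ℕ, 1/(1+x+((k:ℝ)+1))^2 = ∑' k : ℕ, 1/(1+x+((k+1:ℕ):ℝ))^2 := by
      congr 1; ext k; push_cast; ring_nf
    rw [h2, hT, h]
    simp only [Nat.cast_zero, add_zero]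
    ring
  have hsum2 : Summable (fun k : ℕ => 1/(1+x+((k:ℝ)+1))^2) := by
    have := (summable_nat_add_iff 1).mpr hsum
    apply this.congr
    intro k; push_cast; ring_nf
  -- per-term trapezoid inequality
  have hterm : ∀ k : ℕ, 1/(1+x+(k:ℝ)) - 1/(1+x+((k:ℝ)+1)) ≤
      (1/(1+x+(k:ℝ))^2 + 1/(1+x+((k:ℝ)+1))^2)/2 := by
    intro k
    have h1 : (0:ℝ) < 1+x+(k:ℝ) := by positivity
    have := trapezoid h1
    convert this using 3 <;> ring
  have hle : 1/(1+x) ≤ ∑' k : ℕ, (1/(1+x+(k:ℝ))^2 + 1/(1+x+((k:ℝ)+1))^2)/2 := by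
    rw [← (telescope hx).tsum_eq]
    exact Summable.tsum_le_tsum hterm (telescope hx).summable ((hsum.add hsum2).div_const 2)
  have heq : ∑' k : ℕ, (1/(1+x+(k:ℝ))^2 + 1/(1+x+((k:ℝ)+1))^2)/2
      = (T + (T - 1/(1+x)^2))/2 := by
    rw [tsum_div_const, hsum.tsum_add hsum2, hshift]
  rw [heq] at hle
  -- so T ≥ 1/(1+x) + 1/(2(1+x)^2) > 1/x - 1/(2x^2)
  have hfinal : 1/x - 1/(2*x^2) < 1/(1+x) + 1/(2*(1+x)^2) := by
    rw [div_add_div _ _ (by positivity) (by positivity), div_sub_div _ _ (by positivity) (by positivity),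
      div_lt_div_iff₀ (by positivity) (by positivity)]
    nlinarith [sq_nonneg x, mul_pos hx hx, sq_nonneg (1+x)]
  have he : 1/(2*(1+x)^2) = (1/(1+x)^2)/2 := by field_simp
  have : 1/(1+x) + 1/(2*(1+x)^2) ≤ T := by rw [he]; linarith
  linarith


lemma hasDerivAt_psi {x : ℝ} (hx : 0 < x) :
    HasDerivAt (fun y : ℝ => realDigamma (1 + y)) (∑' k : ℕ, 1/(1+x+(k:ℝ))^2) x := by
  have h := (hasDerivAt_S hx).const_add (-γ)
  apply h.congr_of_eventuallyEq
  filter_upwards [eventually_gt_nhds hx] with y hy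
  exact series hy

lemma hasDerivAt_g {x : ℝ} (hx : 0 < x) :
    HasDerivAt (fun y : ℝ => realDigamma (1 + y) - Real.log y - 1/(2*y))
      ((∑' k : ℕ, 1/(1+x+(k:ℝ))^2) - 1/x + 1/(2*x^2)) x := by
  have h1 := hasDerivAt_psi hx
  have h2 := Real.hasDerivAt_log hx.ne'
  have h3 : HasDerivAt (fun y : ℝ => 1/(2*y)) (-(1/(2*x^2))) x := by
    have h := ((hasDerivAt_id x).const_mul (2:ℝ)).inv (by positivity)
    convert h using 1
    · rfl
    · rfl
    · ext y; simp [one_div]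
    · simp; field_simp
  have h4 := (h1.sub h2).sub h3
  convert h4 using 1
  · rfl
  · rfl
  · rfl
  rw [inv_eq_one_div]
  ring

lemma gmono : StrictMonoOn
    (fun x : ℝ => realDigamma (1 + x) - Real.log x - 1 / (2 * x)) (Set.Ioi 0) := by
  apply strictMonoOn_of_deriv_pos (convex_Ioi 0)
  · exact fun x hx => (hasDerivAt_g hx).continuousAt.continuousWithinAt
  · rw [interior_Ioi]
    intro x hx
    rw [(hasDerivAt_g hx).deriv]
    have := trigamma_lb hx
    linarith

lemma gtendsto : Tendsto
    (fun x : ℝ => realDigamma (1 + x) - Real.log x - 1 / (2 * x)) atTop (𝓝 0) := by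
  have hmul : Tendsto (fun x : ℝ => 2 * x) atTop atTop :=
    Tendsto.const_mul_atTop two_pos tendsto_id
  have hx2 : Tendsto (fun x : ℝ => 1/(2*x)) atTop (𝓝 0) := by
    simp only [one_div]
    exact hmul.inv_tendsto_atTop
  have hlog : Tendsto (fun x : ℝ => Real.log (1+x) - Real.log x) atTop (𝓝 0) := by
    have hb : Tendsto (fun x : ℝ => 1/x) atTop (𝓝 0) := by
      simp only [one_div]; exact tendsto_inv_atTop_zero
    have h2 : Tendsto (fun x : ℝ => 1/x + 1) atTop (𝓝 1) := by
      simpa using hb.add (tendsto_const_nhds : Tendsto (fun _ : ℝ => (1:ℝ)) atTop _)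
    have h3 := (Real.continuousAt_log one_ne_zero).tendsto.comp h2
    rw [Real.log_one] at h3
    apply h3.congr'
    filter_upwards [eventually_gt_atTop 0] with y hy
    simp only [Function.comp_apply]
    rw [← Real.log_div (by positivity) hy.ne']
    congr 1
    field_simp
  have hlo : Tendsto (fun x : ℝ => -(1/(2*x))) atTop (𝓝 0) := by
    simpa using hx2.neg
  have hup : Tendsto (fun x : ℝ => Real.log (1+x) - Real.log x - 1/(2*x)) atTop (𝓝 0) := by
    simpa using hlog.sub hx2
  apply tendsto_of_tendsto_of_tendsto_of_le_of_le' hlo hup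
  · filter_upwards [eventually_gt_atTop 0] with y hy
    have := lb hy
    linarith
  · filter_upwards [eventually_gt_atTop 0] with y hy
    have := ub hy
    linarith

end Stmt17Aux

theorem stmt17 :
    StrictMonoOn (fun x : ℝ => realDigamma (1 + x) - Real.log x - 1 / (2 * x)) (Set.Ioi 0) ∧
    Tendsto (fun x : ℝ => realDigamma (1 + x) - Real.log x - 1 / (2 * x)) atTop (nhds 0) ∧
    ∀ x : ℝ, 0 < x → realDigamma (1 + x) < Real.log x + 1 / (2 * x) := by
  refine ⟨Stmt17Aux.gmono, Stmt17Aux.gtendsto, ?_⟩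
  intro x hx
  have h1 := Stmt17Aux.gmono (Set.mem_Ioi.mpr hx) (Set.mem_Ioi.mpr (by linarith : (0:ℝ) < x + 1))
    (by linarith : x < x + 1)
  have h2 : realDigamma (1 + (x+1)) - Real.log (x+1) - 1/(2*(x+1)) ≤ 0 := by
    apply ge_of_tendsto Stmt17Aux.gtendsto
    filter_upwards [eventually_ge_atTop (x+1)] with y hy
    show realDigamma (1 + (x+1)) - Real.log (x+1) - 1/(2*(x+1)) ≤
      realDigamma (1 + y) - Real.log y - 1/(2*y)
    rcases eq_or_lt_of_le hy with h | h
    · rw [h]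
    · exact le_of_lt (Stmt17Aux.gmono (Set.mem_Ioi.mpr (by linarith)) (Set.mem_Ioi.mpr (by linarith)) h)
  simp only at h1
  linarith
end

section
/- Let f : (0,∞) → ℝ be continuous with f(v) = O(v^{k}) (k > 0) as v → 0⁺ and f(v) - e₁·v^{-2}·log v - e₀·v^{-2} = O(v^{-3}·log v) as v → ∞, for constants e₀, e₁ ∈ ℝ. Then the function ζ(s) = ∫₀^∞ v^{-2s}·f(v) dv, defined and holomorphic for -1/2 < Re(s) < (k+1)/2, extends meromorphically to a neighborhood of s = -1/2 with Laurent expansion ζ(s) = (e₁/4)/(s+1/2)² + (e₀/2)/(s+1/2) + c₀ + O(s+1/2), where c₀ = ∫₀^1 v·f(v) dv + ∫₁^∞ v·(f(v) - e₁·v^{-2}·log v - e₀·v^{-2}) dv. -/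
open Filter Asymptotics MeasureTheory Set Complex Topology

lemma aux_locIntOn_indicator {f : ℝ → ℂ} {S : Set ℝ} (hf : LocallyIntegrableOn f S) {t : Set ℝ}
    (ht : MeasurableSet t) : LocallyIntegrableOn (t.indicator f) S := by
  intro x hx
  obtain ⟨u, hu, hi⟩ := hf x hx
  exact ⟨u, hu, hi.indicator ht⟩

lemma aux_ofReal_isBigO {f g : ℝ → ℝ} {l : Filter ℝ} (h : f =O[l] g) :
    (fun v => ((f v : ℂ))) =O[l] g := by
  refine isBigO_norm_left.mp ?_
  simpa [Complex.norm_real] using h.norm_left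

lemma aux_integrableOn_cpow_mul_log {a : ℂ} (ha : a.re < -1) :
    IntegrableOn (fun t : ℝ => (t : ℂ) ^ a * Real.log t) (Set.Ioi 1) := by
  set ε : ℝ := (-1 - a.re) / 2 with hε
  have hε0 : 0 < ε := by simp only [hε]; linarith
  have hmeas : AEStronglyMeasurable (fun t : ℝ => (t : ℂ) ^ a * Real.log t)
      (volume.restrict (Set.Ioi (1:ℝ))) := by
    refine (ContinuousOn.aestronglyMeasurable ?_ measurableSet_Ioi)
    refine ContinuousOn.mul ?_ ?_
    · intro t ht
      exact (Complex.continuousAt_ofReal_cpow_const _ _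
        (Or.inr (lt_trans one_pos ht).ne')).continuousWithinAt
    · exact Complex.continuous_ofReal.comp_continuousOn
        (Real.continuousOn_log.mono (fun t ht => by
          simp only [mem_compl_iff, mem_singleton_iff]
          exact (lt_trans one_pos ht).ne'))
  refine Integrable.mono' ((integrableOn_Ioi_rpow_of_lt
      (show a.re + ε < -1 by simp only [hε]; linarith) one_pos).const_mul (1/ε)) hmeas ?_
  filter_upwards [ae_restrict_mem measurableSet_Ioi] with t ht
  have ht0 : (0:ℝ) < t := lt_trans one_pos ht
  have hlog : Real.log t ≤ t ^ ε / ε := Real.log_le_rpow_div ht0.le hε0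
  have hlog0 : 0 ≤ Real.log t := Real.log_nonneg ht.le
  rw [norm_mul, Complex.norm_cpow_eq_rpow_re_of_pos ht0,
    Complex.norm_real, Real.norm_eq_abs, _root_.abs_of_nonneg hlog0]
  calc t ^ a.re * Real.log t ≤ t ^ a.re * (t ^ ε / ε) := by
        exact mul_le_mul_of_nonneg_left hlog (Real.rpow_nonneg ht0.le _)
    _ = 1/ε * t ^ (a.re + ε) := by rw [Real.rpow_add ht0]; ring

lemma aux_integral_cpow_mul_log {a : ℂ} (ha : a.re < -1) :
    ∫ t in Set.Ioi (1:ℝ), (t : ℂ) ^ a * Real.log t = 1 / (a + 1) ^ 2 := by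
  have ha1 : a + 1 ≠ 0 := by
    intro h
    have := congrArg Complex.re h
    simp at this; linarith
  have hane : a ≠ -1 := by
    intro h; apply ha1; rw [h]; ring
  set G : ℝ → ℂ := fun t => (t : ℂ) ^ (a+1) / (a+1) * Real.log t - (t:ℂ)^(a+1)/(a+1)/(a+1)
    with hG
  have hderiv : ∀ t ∈ Set.Ioi (1:ℝ), HasDerivAt G ((t:ℂ)^a * Real.log t) t := by
    intro t ht
    have ht0 : (0:ℝ) < t := lt_trans one_pos ht
    have h1 : HasDerivAt (fun y : ℝ => (y:ℂ)^(a+1)/(a+1)) ((t:ℂ)^a) t :=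
      hasDerivAt_ofReal_cpow_const' ht0.ne' hane
    have h2 : HasDerivAt (fun y : ℝ => ((Real.log y : ℝ) : ℂ)) ((t:ℝ)⁻¹ : ℝ) t :=
      (Real.hasDerivAt_log ht0.ne').ofReal_comp
    have h3 := (h1.mul h2).sub (h1.div_const (a+1))
    refine h3.congr_deriv ?_
    have htne : (t:ℂ) ≠ 0 := by exact_mod_cast ht0.ne'
    have : (t:ℂ)^(a+1) = (t:ℂ)^a * t := by
      rw [Complex.cpow_add _ _ htne, Complex.cpow_one]
    rw [this, Complex.ofReal_inv]
    field_simp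
    ring
  have hcont : ContinuousWithinAt G (Set.Ici 1) 1 := by
    have h1 : HasDerivAt (fun y : ℝ => (y:ℂ)^(a+1)/(a+1)) (((1:ℝ):ℂ)^a) 1 :=
      hasDerivAt_ofReal_cpow_const' one_ne_zero hane
    have h2 : HasDerivAt (fun y : ℝ => ((Real.log y : ℝ) : ℂ)) (((1:ℝ))⁻¹ : ℝ) 1 :=
      (Real.hasDerivAt_log one_ne_zero).ofReal_comp
    exact ((h1.mul h2).sub (h1.div_const (a+1))).continuousAt.continuousWithinAt
  have htend : Tendsto G atTop (𝓝 0) := by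
    have hT2 : Tendsto (fun t : ℝ => (t:ℂ)^(a+1)) atTop (𝓝 0) := by
      refine squeeze_zero_norm' ?_
        (by simpa [neg_neg] using tendsto_rpow_neg_atTop (show (0:ℝ) < -(a.re+1) by linarith))
      filter_upwards [eventually_gt_atTop 0] with t ht
      rw [Complex.norm_cpow_eq_rpow_re_of_pos ht]
      simp
    have htz : Tendsto (fun t : ℝ => Real.log t * t ^ (a.re+1)) atTop (𝓝 0) := by
      have h := ((isLittleO_log_rpow_atTop
          (show (0:ℝ) < -(a.re+1)/2 by linarith)).isBigO.mul
          (isBigO_refl (fun t : ℝ => t ^ (a.re+1)) atTop))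
      have h2 : (fun t : ℝ => t ^ (-(a.re+1)/2) * t ^ (a.re+1)) =O[atTop]
          fun t : ℝ => t ^ ((a.re+1)/2) := by
        refine IsBigO.of_bound 1 ?_
        filter_upwards [eventually_gt_atTop 0] with t ht
        rw [← Real.rpow_add ht, show -(a.re+1)/2 + (a.re+1) = (a.re+1)/2 by ring, one_mul]
      exact (h.trans h2).trans_tendsto
        (by simpa [neg_neg] using tendsto_rpow_neg_atTop (show (0:ℝ) < -((a.re+1)/2) by linarith))
    have hT1 : Tendsto (fun t : ℝ => (t:ℂ)^(a+1) * Real.log t) atTop (𝓝 0) := by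
      refine squeeze_zero_norm' ?_ htz
      filter_upwards [eventually_ge_atTop 1] with t ht
      have ht0 : (0:ℝ) < t := lt_of_lt_of_le one_pos ht
      rw [norm_mul, Complex.norm_cpow_eq_rpow_re_of_pos ht0,
        Complex.norm_real, Real.norm_eq_abs, _root_.abs_of_nonneg (Real.log_nonneg ht)]
      simp [mul_comm]
    have := (hT1.div_const (a+1)).sub ((hT2.div_const (a+1)).div_const (a+1))
    simp only [zero_div, sub_zero] at this
    refine this.congr (fun t => ?_)
    simp only [hG]
    ring
  have := integral_Ioi_of_hasDerivAt_of_tendsto hcont hderiv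
    (aux_integrableOn_cpow_mul_log ha) htend
  rw [this]
  simp only [hG, Complex.ofReal_one, Complex.one_cpow, Real.log_one, Complex.ofReal_zero,
    mul_zero, zero_sub, neg_neg]
  field_simp

lemma aux_integral_ofReal {μ : MeasureTheory.Measure ℝ} {f : ℝ → ℝ} :
    ∫ x, ((f x : ℂ)) ∂μ = ((∫ x, f x ∂μ : ℝ) : ℂ) :=
  integral_ofReal

theorem stmt18 (f : ℝ → ℝ) (hc : ContinuousOn f (Set.Ioi 0)) (k : ℝ) (hk : 0 < k)
    (e₀ e₁ : ℝ)
    (h0 : f =O[nhdsWithin 0 (Set.Ioi 0)] fun v : ℝ => v ^ k)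
    (hinf : (fun v : ℝ => f v - e₁ * v ^ (-(2 : ℝ)) * Real.log v - e₀ * v ^ (-(2 : ℝ)))
      =O[atTop] fun v : ℝ => v ^ (-(3 : ℝ)) * Real.log v) :
    ∃ g : ℂ → ℂ, AnalyticAt ℂ g (-(1 / 2)) ∧
      g (-(1 / 2)) =
        (((∫ v in Set.Ioc (0 : ℝ) 1, v * f v) +
          ∫ v in Set.Ioi (1 : ℝ),
            v * (f v - e₁ * v ^ (-(2 : ℝ)) * Real.log v - e₀ * v ^ (-(2 : ℝ))) : ℝ) : ℂ) ∧
      ∀ s : ℂ, -(1 / 2) < s.re → s.re < (k + 1) / 2 →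
        (∫ v in Set.Ioi (0 : ℝ), (v : ℂ) ^ (-2 * s) * (f v : ℂ)) =
          ((e₁ : ℂ) / 4) / (s + 1 / 2) ^ 2 + ((e₀ : ℂ) / 2) / (s + 1 / 2) + g s := by
  have hcfC : ContinuousOn (fun v : ℝ => ((f v : ℂ))) (Set.Ioi 0) :=
    Complex.continuous_ofReal.comp_continuousOn hc
  set F₁r : ℝ → ℝ := fun v => f v - e₁ * v ^ (-(2:ℝ)) * Real.log v - e₀ * v ^ (-(2:ℝ))
    with hF₁r
  have hcF₁ : ContinuousOn F₁r (Set.Ioi 0) := by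
    have hpow : ContinuousOn (fun v : ℝ => v ^ (-(2:ℝ))) (Set.Ioi 0) := fun v hv =>
      (Real.continuousAt_rpow_const v _ (Or.inl (ne_of_gt hv))).continuousWithinAt
    have hlog : ContinuousOn Real.log (Set.Ioi 0) :=
      Real.continuousOn_log.mono (fun v hv => ne_of_gt hv)
    exact (hc.sub ((continuousOn_const.mul hpow).mul hlog)).sub (continuousOn_const.mul hpow)
  set F₀ : ℝ → ℂ := Set.indicator (Set.Ioc 0 1) (fun v : ℝ => ((f v : ℂ))) with hF₀def
  set F₁ : ℝ → ℂ := Set.indicator (Set.Ioi 1) (fun v : ℝ => ((F₁r v : ℂ))) with hF₁def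
  have hF₀loc : LocallyIntegrableOn F₀ (Set.Ioi 0) :=
    aux_locIntOn_indicator (hcfC.locallyIntegrableOn measurableSet_Ioi) measurableSet_Ioc
  have hF₁loc : LocallyIntegrableOn F₁ (Set.Ioi 0) :=
    aux_locIntOn_indicator
      ((Complex.continuous_ofReal.comp_continuousOn hcF₁).locallyIntegrableOn measurableSet_Ioi)
      measurableSet_Ioi
  have hF₀top : ∀ a : ℝ, F₀ =O[atTop] (· ^ (-a)) := by
    intro a
    refine (isBigO_zero _ _).congr' ?_ EventuallyEq.rfl
    filter_upwards [eventually_gt_atTop 1] with v hv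
    exact (Set.indicator_of_notMem (fun h => absurd h.2 (not_le.mpr hv)) _).symm
  have hF₁bot : ∀ b : ℝ, F₁ =O[𝓝[>] (0:ℝ)] (· ^ (-b)) := by
    intro b
    refine (isBigO_zero _ _).congr' ?_ EventuallyEq.rfl
    filter_upwards [Ioo_mem_nhdsGT_of_mem (Set.left_mem_Ico.mpr one_pos)] with v hv
    exact (Set.indicator_of_notMem (fun h => absurd hv.2 (not_lt.mpr h.le)) _).symm
  have hF₀bot : F₀ =O[𝓝[>] (0:ℝ)] (· ^ (-(-k))) := by
    have h1 : F₀ =ᶠ[𝓝[>] (0:ℝ)] fun v => ((f v : ℂ)) := by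
      filter_upwards [Ioo_mem_nhdsGT_of_mem (Set.left_mem_Ico.mpr one_pos)] with v hv
      exact Set.indicator_of_mem (show v ∈ Set.Ioc (0:ℝ) 1 from ⟨hv.1, hv.2.le⟩) _
    have h2 := aux_ofReal_isBigO h0
    refine (h2.congr' h1.symm EventuallyEq.rfl).congr' EventuallyEq.rfl ?_
    simp [neg_neg]
  have hF₁top : F₁ =O[atTop] (· ^ (-(5/2 : ℝ))) := by
    have h1 := isBigO_rpow_top_log_smul (show (5/2:ℝ) < 3 by norm_num)
      (isBigO_refl (fun t : ℝ => t ^ (-(3:ℝ))) atTop)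
    have h2 : (fun v : ℝ => v ^ (-(3:ℝ)) * Real.log v) =O[atTop] (· ^ (-(5/2:ℝ))) :=
      h1.congr' (Eventually.of_forall fun t => by simp [smul_eq_mul, mul_comm]) EventuallyEq.rfl
    have h3 := aux_ofReal_isBigO (hinf.trans h2)
    have h4 : F₁ =ᶠ[atTop] fun v => ((F₁r v : ℂ)) := by
      filter_upwards [eventually_gt_atTop 1] with v hv
      exact Set.indicator_of_mem hv _
    exact h3.congr' h4.symm EventuallyEq.rfl
  refine ⟨fun s => mellin F₀ (1 - 2*s) + mellin F₁ (1 - 2*s), ?_, ?_, ?_⟩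
  · -- analyticity
    refine DifferentiableOn.analyticAt (s := Metric.ball (-(1/2):ℂ) (1/8)) ?_
      (Metric.ball_mem_nhds _ (by norm_num))
    intro z hz
    have h2 : ‖z - (-(1/2))‖ < 1/8 := by
      rw [← Complex.dist_eq]; exact hz
    have h1 : |(z - (-(1/2))).re| ≤ ‖z - (-(1/2))‖ := Complex.abs_re_le_norm _
    have hre : ((z - (-(1/2)) : ℂ)).re = z.re + 1/2 := by
      simp [Complex.sub_re]
    rw [hre] at h1
    have h4 := abs_lt.mp (lt_of_le_of_lt h1 h2)
    have hzre : -(5/8) < z.re ∧ z.re < -(3/8) :=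
      ⟨by linarith [h4.1], by linarith [h4.2]⟩
    have hwre : (1 - 2*z).re = 1 - 2*z.re := by simp
    have hinner : DifferentiableAt ℂ (fun z : ℂ => 1 - 2*z) z :=
      (differentiableAt_const (1:ℂ)).sub (differentiableAt_id.const_mul 2)
    have hd0 : DifferentiableAt ℂ (mellin F₀) (1 - 2*z) :=
      mellin_differentiableAt_of_isBigO_rpow hF₀loc (hF₀top 3)
        (by rw [hwre]; linarith [hzre.1]) hF₀bot (by rw [hwre]; linarith [hzre.2])
    have hd1 : DifferentiableAt ℂ (mellin F₁) (1 - 2*z) :=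
      mellin_differentiableAt_of_isBigO_rpow hF₁loc hF₁top
        (by rw [hwre]; linarith [hzre.1]) (hF₁bot (-k)) (by rw [hwre]; linarith [hzre.2])
    exact ((hd0.comp z hinner).add (hd1.comp z hinner)).differentiableWithinAt
  · -- value at -1/2
    have h2 : (1:ℂ) - 2*(-(1/2)) = 2 := by norm_num
    simp only [h2]
    have e0 : mellin F₀ 2 = ((∫ v in Set.Ioc (0:ℝ) 1, v * f v : ℝ) : ℂ) := by
      rw [mellin]
      have hfun : (fun t : ℝ => (t:ℂ)^((2:ℂ)-1) • F₀ t)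
          = Set.indicator (Set.Ioc 0 1) (fun t : ℝ => (((t * f t : ℝ)) : ℂ)) := by
        funext t
        by_cases ht : t ∈ Set.Ioc (0:ℝ) 1
        · simp only [hF₀def, Set.indicator_of_mem ht, smul_eq_mul,
            show (2:ℂ)-1 = 1 from by norm_num, Complex.cpow_one]
          push_cast; ring
        · simp [hF₀def, ht]
      rw [hfun, setIntegral_indicator measurableSet_Ioc,
        show Set.Ioi (0:ℝ) ∩ Set.Ioc 0 1 = Set.Ioc 0 1 from
          Set.inter_eq_right.mpr (fun x hx => hx.1), aux_integral_ofReal]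
    have e1 : mellin F₁ 2 = ((∫ v in Set.Ioi (1:ℝ), v * F₁r v : ℝ) : ℂ) := by
      rw [mellin]
      have hfun : (fun t : ℝ => (t:ℂ)^((2:ℂ)-1) • F₁ t)
          = Set.indicator (Set.Ioi 1) (fun t : ℝ => (((t * F₁r t : ℝ)) : ℂ)) := by
        funext t
        by_cases ht : t ∈ Set.Ioi (1:ℝ)
        · simp only [hF₁def, Set.indicator_of_mem ht, smul_eq_mul,
            show (2:ℂ)-1 = 1 from by norm_num, Complex.cpow_one]
          push_cast; ring
        · simp [hF₁def, ht]
      rw [hfun, setIntegral_indicator measurableSet_Ioi,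
        show Set.Ioi (0:ℝ) ∩ Set.Ioi 1 = Set.Ioi 1 from
          Set.inter_eq_right.mpr (Set.Ioi_subset_Ioi zero_le_one), aux_integral_ofReal]
    rw [e0, e1]
    push_cast
    ring
  · -- the identity
    intro s hs1 hs2
    have hwre : (1 - 2*s).re = 1 - 2*s.re := by simp
    have hsne : s + 1/2 ≠ 0 := by
      intro h
      have := congrArg Complex.re h
      simp at this
      linarith
    set a : ℂ := -2*s - 2 with ha
    have hare : a.re < -1 := by
      have : a.re = -2*s.re - 2 := by simp [ha]
      rw [this]; linarith
    have hintP1 : IntegrableOn (fun t : ℝ => (t:ℂ)^a * Real.log t) (Set.Ioi 1) :=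
      aux_integrableOn_cpow_mul_log hare
    have hintP2 : IntegrableOn (fun t : ℝ => (t:ℂ)^a) (Set.Ioi 1) :=
      integrableOn_Ioi_cpow_of_lt hare one_pos
    set P : ℝ → ℂ := fun v => (e₁:ℂ) * ((v:ℂ)^a * Real.log v) + (e₀:ℂ) * (v:ℂ)^a with hP
    have hintP : IntegrableOn P (Set.Ioi 1) := (hintP1.const_mul _).add (hintP2.const_mul _)
    have hmc0 : MellinConvergent F₀ (1-2*s) :=
      mellinConvergent_of_isBigO_rpow hF₀loc (hF₀top (2 - 2*s.re))
        (by rw [hwre]; linarith) hF₀bot (by rw [hwre]; linarith)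
    have hmc1 : MellinConvergent F₁ (1-2*s) :=
      mellinConvergent_of_isBigO_rpow hF₁loc hF₁top
        (by rw [hwre]; linarith) (hF₁bot (-k)) (by rw [hwre]; linarith)
    have hi0 : IntegrableOn (fun t : ℝ => (t:ℂ)^(-2*s) • F₀ t) (Set.Ioi 0) := by
      have h := hmc0
      unfold MellinConvergent at h
      simpa only [show (1:ℂ)-2*s-1 = -2*s from by ring] using h
    have hi1 : IntegrableOn (fun t : ℝ => (t:ℂ)^(-2*s) • F₁ t) (Set.Ioi 0) := by
      have h := hmc1
      unfold MellinConvergent at h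
      simpa only [show (1:ℂ)-2*s-1 = -2*s from by ring] using h
    have hiC : IntegrableOn (Set.indicator (Set.Ioi 1) P) (Set.Ioi 0) := by
      rw [IntegrableOn, integrable_indicator_iff measurableSet_Ioi, IntegrableOn,
        Measure.restrict_restrict measurableSet_Ioi,
        Set.inter_eq_left.mpr (Set.Ioi_subset_Ioi zero_le_one)]
      exact hintP
    have hdecomp : ∀ v ∈ Set.Ioi (0:ℝ), (v:ℂ)^(-2*s) * (f v : ℂ) =
        (v:ℂ)^(-2*s) • F₀ v + (v:ℂ)^(-2*s) • F₁ v + Set.indicator (Set.Ioi 1) P v := by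
      intro v hv
      have hv0 : (0:ℝ) < v := hv
      have hvne : (v:ℂ) ≠ 0 := Complex.ofReal_ne_zero.mpr hv0.ne'
      by_cases h1 : v ≤ 1
      · have hmem : v ∈ Set.Ioc (0:ℝ) 1 := ⟨hv0, h1⟩
        have hnot : v ∉ Set.Ioi (1:ℝ) := not_lt.mpr h1
        simp [hF₀def, hF₁def, hmem, hnot, smul_eq_mul]
      · push_neg at h1
        have hnot : v ∉ Set.Ioc (0:ℝ) 1 := fun h => absurd h.2 (not_le.mpr h1)
        have hmem : v ∈ Set.Ioi (1:ℝ) := h1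
        have hsplit : (v:ℂ)^a = (v:ℂ)^(-2*s) * (v:ℂ)^((-2 : ℂ)) := by
          have hae : a = -2*s + (-2 : ℂ) := by rw [ha]; ring
          rw [hae, Complex.cpow_add _ _ hvne]
        simp only [hF₀def, hF₁def, Set.indicator_of_notMem hnot,
          Set.indicator_of_mem hmem, smul_eq_mul, mul_zero, zero_add, hP, hF₁r]
        push_cast [Complex.ofReal_cpow hv0.le]
        rw [hsplit]
        ring
    have hm0 : ∫ v in Set.Ioi (0:ℝ), (v:ℂ)^(-2*s) • F₀ v = mellin F₀ (1-2*s) := by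
      rw [mellin]
      simp only [show (1:ℂ)-2*s-1 = -2*s from by ring]
    have hm1 : ∫ v in Set.Ioi (0:ℝ), (v:ℂ)^(-2*s) • F₁ v = mellin F₁ (1-2*s) := by
      rw [mellin]
      simp only [show (1:ℂ)-2*s-1 = -2*s from by ring]
    have hC : ∫ v in Set.Ioi (0:ℝ), Set.indicator (Set.Ioi 1) P v =
        ((e₁:ℂ)/4)/(s+1/2)^2 + ((e₀:ℂ)/2)/(s+1/2) := by
      rw [setIntegral_indicator measurableSet_Ioi,
        Set.inter_eq_right.mpr (Set.Ioi_subset_Ioi zero_le_one)]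
      rw [hP]
      rw [integral_add (hintP1.const_mul _) (hintP2.const_mul _),
        integral_const_mul, integral_const_mul, aux_integral_cpow_mul_log hare,
        integral_Ioi_cpow_of_lt hare one_pos]
      simp only [Complex.ofReal_one, Complex.one_cpow]
      have h1 : a + 1 = -(2*(s+1/2)) := by rw [ha]; ring
      rw [h1]
      rw [show (-(2 * (s + 1/2)))^2 = (4:ℂ) * (s + 1/2)^2 from by ring,
        show (-1:ℂ) / -(2*(s+1/2)) = 1/(2*(s+1/2)) from neg_div_neg_eq 1 _]
      rw [mul_one_div, mul_one_div, ← div_div, ← div_div]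
    calc ∫ v in Set.Ioi (0:ℝ), (v:ℂ)^(-2*s) * (f v : ℂ)
        = ∫ v in Set.Ioi (0:ℝ), ((v:ℂ)^(-2*s) • F₀ v + (v:ℂ)^(-2*s) • F₁ v
            + Set.indicator (Set.Ioi 1) P v) :=
          setIntegral_congr_fun measurableSet_Ioi hdecomp
      _ = (∫ v in Set.Ioi (0:ℝ), (v:ℂ)^(-2*s) • F₀ v)
          + (∫ v in Set.Ioi (0:ℝ), (v:ℂ)^(-2*s) • F₁ v)
          + ∫ v in Set.Ioi (0:ℝ), Set.indicator (Set.Ioi 1) P v := by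
          have hi01 : IntegrableOn (fun t : ℝ => (t:ℂ)^(-2*s) • F₀ t + (t:ℂ)^(-2*s) • F₁ t)
              (Set.Ioi 0) := hi0.add hi1
          rw [integral_add hi01 hiC, integral_add hi0 hi1]
      _ = ((e₁:ℂ)/4)/(s+1/2)^2 + ((e₀:ℂ)/2)/(s+1/2)
          + (mellin F₀ (1-2*s) + mellin F₁ (1-2*s)) := by
          rw [hm0, hm1, hC]; ring
end
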